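/- arXiv:1209.3575 — 4 statements merged into one kernel-verified Lean document; each statement's English description precedes it below -/
import Mathlib

section
/- Let M be a matroid of rank r on a finite set E and let E = E_1 ∪ E_2 be a good 2-partition of M with associated integers a_1, a_2 (so 0 < a_i < r(M|E_i) and a_1 + a_2 = r). Then the families B(M_1) = {B a base of M : |B ∩ E_1| ≤ a_1} and B(M_2) = {B a base of M : |B ∩ E_2| ≤ a_2} are each the collection of bases of a matroid on E. -/
open Matroid Set

/-- The rank of a matroid: the supremum of the cardinalities of its independent sets. -/
noncomputable def mrk {α : Type*} (M : Matroid α) : ℕ :=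
  sSup {n : ℕ | ∃ I, M.Indep I ∧ I.ncard = n}

/-- `ℬ` is the collection of bases of a matroid on the ground set `E`. -/
def IsBaseCollection {α : Type*} (E : Set α) (ℬ : Set (Set α)) : Prop :=
  ∃ N : Matroid α, N.E = E ∧ ∀ B, N.IsBase B ↔ B ∈ ℬ

/-- A good 2-partition of a rank-`r` matroid `M`: the ground set is partitioned as
`E₁ ∪ E₂` with `r(M|Eᵢ) > 1`, integers `0 < aᵢ < r(M|Eᵢ)`, `(P1)` `r = a₁ + a₂`, and `(P2)`
unions of small independent sets of the two restrictions are independent in `M`. -/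
def IsGoodPartition2 {α : Type*} (M : Matroid α) (r : ℕ) (E₁ E₂ : Set α) (a₁ a₂ : ℕ) : Prop :=
  E₁ ∪ E₂ = M.E ∧ Disjoint E₁ E₂ ∧
  1 < mrk (M ↾ E₁) ∧ 1 < mrk (M ↾ E₂) ∧
  0 < a₁ ∧ a₁ < mrk (M ↾ E₁) ∧ 0 < a₂ ∧ a₂ < mrk (M ↾ E₂) ∧
  r = a₁ + a₂ ∧
  ∀ X Y : Set α, (M ↾ E₁).Indep X → X.ncard ≤ a₁ →
    (M ↾ E₂).Indep Y → Y.ncard ≤ a₂ → M.Indep (X ∪ Y)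

section Aux

variable {α : Type*} {M : Matroid α}

lemma mrk_bddAbove (hfin : M.E.Finite) :
    BddAbove {n : ℕ | ∃ I, M.Indep I ∧ I.ncard = n} := by
  refine ⟨M.E.ncard, fun n hn => ?_⟩
  obtain ⟨I, hI, rfl⟩ := hn
  exact ncard_le_ncard hI.subset_ground hfin

lemma indep_ncard_le_mrk (hfin : M.E.Finite) {I : Set α} (hI : M.Indep I) :
    I.ncard ≤ mrk M :=
  le_csSup (mrk_bddAbove hfin) ⟨I, hI, rfl⟩

lemma exists_indep_ncard_eq_mrk (hfin : M.E.Finite) :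
    ∃ I, M.Indep I ∧ I.ncard = mrk M :=
  Nat.sSup_mem ⟨0, show ∃ I, M.Indep I ∧ I.ncard = 0 from ⟨∅, M.empty_indep, by simp⟩⟩
    (mrk_bddAbove hfin)

lemma base_of_ncard_eq_mrk (hfin : M.E.Finite) {B : Set α} (hB : M.Indep B)
    (hcard : B.ncard = mrk M) : M.IsBase B := by
  refine hB.isBase_of_maximal fun J hJ hBJ => ?_
  have hJfin : J.Finite := hfin.subset hJ.subset_ground
  exact eq_of_subset_of_ncard_le hBJ (hcard ▸ indep_ncard_le_mrk hfin hJ) hJfin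

lemma ncard_le_of_subset_closure (hfin : M.E.Finite) {I K : Set α} (hI : M.Indep I)
    (hK : M.Indep K) (hKI : K ⊆ M.closure I) : K.ncard ≤ I.ncard := by
  by_contra hlt
  push_neg at hlt
  have hIfin : I.Finite := hfin.subset hI.subset_ground
  have hKfin : K.Finite := hfin.subset hK.subset_ground
  have hen : I.encard < K.encard := by
    rw [← hIfin.cast_ncard_eq, ← hKfin.cast_ncard_eq]
    exact_mod_cast hlt
  obtain ⟨e, ⟨heK, heI⟩, hins⟩ := hI.augment hK hen
  have : M.Dep (insert e I) := hI.insert_dep_iff.2 ⟨hKI heK, heI⟩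
  exact this.not_indep hins

lemma good_aux (hfin : M.E.Finite) (r : ℕ) (hrank : mrk M = r) (E₁ E₂ : Set α) (a₁ a₂ : ℕ)
    (hgood : IsGoodPartition2 M r E₁ E₂ a₁ a₂) :
    IsBaseCollection M.E {B | M.IsBase B ∧ (B ∩ E₁).ncard ≤ a₁} := by
  obtain ⟨hE, hdisj, -, -, -, ha₁, -, ha₂, hr, hP2⟩ := hgood
  have hE₁ : E₁ ⊆ M.E := hE ▸ subset_union_left
  have hE₂ : E₂ ⊆ M.E := hE ▸ subset_union_right
  have hfin1 : E₁.Finite := hfin.subset hE₁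
  have hfin2 : E₂.Finite := hfin.subset hE₂
  -- split an independent set's cardinality over the partition
  have hsplit : ∀ I : Set α, M.Indep I → I.ncard = (I ∩ E₁).ncard + (I ∩ E₂).ncard := by
    intro I hI
    have hIE : I ∩ (E₁ ∪ E₂) = I := by
      rw [hE, inter_eq_self_of_subset_left hI.subset_ground]
    calc I.ncard = ((I ∩ E₁) ∪ (I ∩ E₂)).ncard := by rw [← inter_union_distrib_left, hIE]
      _ = (I ∩ E₁).ncard + (I ∩ E₂).ncard :=
        ncard_union_eq (hdisj.mono inter_subset_right inter_subset_right)
          (hfin1.inter_of_right I) (hfin2.inter_of_right I)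
  -- a base of `M` meeting `E₁` in exactly `a₁` elements
  obtain ⟨I₁, hI₁, hI₁card⟩ := exists_indep_ncard_eq_mrk (M := M ↾ E₁) (by simpa using hfin1)
  obtain ⟨X₀, hX₀I, hX₀card⟩ := exists_subset_card_eq (n := a₁) (hI₁card ▸ ha₁.le)
  obtain ⟨I₂, hI₂, hI₂card⟩ := exists_indep_ncard_eq_mrk (M := M ↾ E₂) (by simpa using hfin2)
  obtain ⟨Y₀, hY₀I, hY₀card⟩ := exists_subset_card_eq (n := a₂) (hI₂card ▸ ha₂.le)
  have hX₀ : (M ↾ E₁).Indep X₀ := hI₁.subset hX₀I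
  have hY₀ : (M ↾ E₂).Indep Y₀ := hI₂.subset hY₀I
  have hX₀E : X₀ ⊆ E₁ := hX₀.subset_ground
  have hY₀E : Y₀ ⊆ E₂ := hY₀.subset_ground
  have hB₀ : M.Indep (X₀ ∪ Y₀) := hP2 X₀ Y₀ hX₀ hX₀card.le hY₀ hY₀card.le
  have hB₀card : (X₀ ∪ Y₀).ncard = r := by
    rw [ncard_union_eq (hdisj.mono hX₀E hY₀E) (hfin1.subset hX₀E) (hfin2.subset hY₀E),
      hX₀card, hY₀card, hr]
  have hB₀inter : (X₀ ∪ Y₀) ∩ E₁ = X₀ := by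
    rw [union_inter_distrib_right, inter_eq_self_of_subset_left hX₀E,
      (hdisj.symm.mono hY₀E (le_refl E₁)).inter_eq, union_empty]
  -- the augmentation property for the family
  have haug : ∀ ⦃I J : Set α⦄, (M.Indep I ∧ (I ∩ E₁).ncard ≤ a₁) →
      (M.Indep J ∧ (J ∩ E₁).ncard ≤ a₁) → I.ncard < J.ncard →
      ∃ e ∈ J, e ∉ I ∧ (M.Indep (insert e I) ∧ ((insert e I) ∩ E₁).ncard ≤ a₁) := by
    rintro I J ⟨hI, hIa⟩ ⟨hJ, hJa⟩ hlt
    have hIfin : I.Finite := hfin.subset hI.subset_ground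
    have hJfin : J.Finite := hfin.subset hJ.subset_ground
    have hen : I.encard < J.encard := by
      rw [← hIfin.cast_ncard_eq, ← hJfin.cast_ncard_eq]; exact_mod_cast hlt
    rcases lt_or_eq_of_le hIa with h1 | h1
    · obtain ⟨e, ⟨heJ, heI⟩, hins⟩ := hI.augment hJ hen
      refine ⟨e, heJ, heI, hins, ?_⟩
      calc ((insert e I) ∩ E₁).ncard ≤ (insert e (I ∩ E₁)).ncard :=
            ncard_le_ncard (fun x hx => by
              rcases hx with ⟨hx1, hx2⟩
              rcases hx1 with rfl | h
              · exact mem_insert _ _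
              · exact mem_insert_of_mem _ ⟨h, hx2⟩) ((hIfin.inter_of_left E₁).insert e)
        _ ≤ (I ∩ E₁).ncard + 1 := ncard_insert_le _ _
        _ ≤ a₁ := h1
    · -- `I` already meets `E₁` in `a₁` elements; must augment inside `E₂`
      by_contra hcon
      push_neg at hcon
      -- every element of `J ∩ E₂` lies in the closure of `I`
      have hJ₂cl : J ∩ E₂ ⊆ M.closure I := by
        rintro e ⟨heJ, heE₂⟩
        by_cases heI : e ∈ I
        · exact M.subset_closure I hI.subset_ground heI
        have heE₁ : e ∉ E₁ := fun h => hdisj.ne_of_mem h heE₂ rfl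
        have hbound : ((insert e I) ∩ E₁).ncard ≤ a₁ := by
          rw [insert_inter_of_notMem heE₁]; exact hIa
        have hnotindep : ¬ M.Indep (insert e I) :=
          fun h => absurd hbound (not_le_of_gt (hcon e heJ heI h))
        rw [hI.mem_closure_iff]
        exact Or.inl ⟨hnotindep, insert_subset (hJ.subset_ground heJ) hI.subset_ground⟩
      -- build a too-large independent set inside the closure of `I`
      set k := (I ∩ E₂).ncard with hk
      have hIcard : I.ncard = a₁ + k := by rw [hsplit I hI, h1]
      have hJ₂indep : (M ↾ E₂).Indep (J ∩ E₂) :=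
        (M.restrict_indep_iff).2 ⟨hJ.subset inter_subset_left, inter_subset_right⟩
      have hJcard : J.ncard ≤ a₁ + (J ∩ E₂).ncard := by
        rw [hsplit J hJ]; exact Nat.add_le_add_right hJa _
      have hk1J : k + 1 ≤ (J ∩ E₂).ncard := by omega
      have hIler : I.ncard < r := by
        have := indep_ncard_le_mrk hfin hJ
        omega
      have hk1a : k + 1 ≤ a₂ := by omega
      obtain ⟨Y, hYJ, hYcard⟩ := exists_subset_card_eq hk1J
      have hYindep : (M ↾ E₂).Indep Y := hJ₂indep.subset hYJ
      have hXindep : (M ↾ E₁).Indep (I ∩ E₁) :=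
        (M.restrict_indep_iff).2 ⟨hI.subset inter_subset_left, inter_subset_right⟩
      have hZ : M.Indep ((I ∩ E₁) ∪ Y) := hP2 _ Y hXindep h1.le hYindep (hYcard ▸ hk1a)
      have hZcl : (I ∩ E₁) ∪ Y ⊆ M.closure I :=
        union_subset (inter_subset_left.trans (M.subset_closure I hI.subset_ground))
          (hYJ.trans hJ₂cl)
      have hZcard : ((I ∩ E₁) ∪ Y).ncard = a₁ + (k + 1) := by
        rw [ncard_union_eq (hdisj.mono inter_subset_right (hYJ.trans inter_subset_right))
          (hfin1.subset inter_subset_right) (hfin2.subset (hYJ.trans inter_subset_right)),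
          h1, hYcard]
      have := ncard_le_of_subset_closure hfin hI hZ hZcl
      omega
  -- assemble the matroid
  have hemp : M.Indep (∅ : Set α) ∧ ((∅ : Set α) ∩ E₁).ncard ≤ a₁ := ⟨M.empty_indep, by simp⟩
  have hsub : ∀ ⦃I J : Set α⦄, (M.Indep J ∧ (J ∩ E₁).ncard ≤ a₁) → I ⊆ J →
      (M.Indep I ∧ (I ∩ E₁).ncard ≤ a₁) := fun I J hJ hIJ =>
    ⟨hJ.1.subset hIJ, le_trans (ncard_le_ncard (inter_subset_inter_left _ hIJ)
      (hfin1.inter_of_right J)) hJ.2⟩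
  have hgr : ∀ ⦃I : Set α⦄, (M.Indep I ∧ (I ∩ E₁).ncard ≤ a₁) → I ⊆ M.E :=
    fun I hI => hI.1.subset_ground
  set N := (IndepMatroid.ofFinite hfin (fun I => M.Indep I ∧ (I ∩ E₁).ncard ≤ a₁)
    hemp hsub haug hgr).matroid with hN
  have hNI : ∀ I : Set α, N.Indep I ↔ (M.Indep I ∧ (I ∩ E₁).ncard ≤ a₁) := fun I => by
    rw [hN]; simp
  refine ⟨N, by rw [hN]; simp, fun B => ?_⟩
  constructor
  · intro hB
    have hBI := (hNI B).1 hB.indep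
    have hBr : B.ncard = r := by
      refine le_antisymm (hrank ▸ indep_ncard_le_mrk hfin hBI.1) ?_
      by_contra hlt
      push_neg at hlt
      obtain ⟨e, heB₀, heB, hins⟩ := haug hBI ⟨hB₀, by rw [hB₀inter]; exact hX₀card.le⟩ (hB₀card ▸ hlt)
      have := hB.eq_of_subset_indep ((hNI _).2 hins) (subset_insert e B)
      exact heB (this ▸ mem_insert e B)
    exact ⟨base_of_ncard_eq_mrk hfin hBI.1 (hrank ▸ hBr), hBI.2⟩
  · rintro ⟨hMB, hb⟩
    refine Indep.isBase_of_maximal ((hNI B).2 ⟨hMB.indep, hb⟩) fun J hJ hBJ => ?_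
    exact hMB.eq_of_subset_indep ((hNI J).1 hJ).1 hBJ

end Aux

/-- for a good 2-partition of `M` with integers `a₁, a₂`, the families
`{B base of M : |B ∩ E₁| ≤ a₁}` and `{B base of M : |B ∩ E₂| ≤ a₂}` are each the
collection of bases of a matroid on `E`. -/
theorem statement0 {α : Type*} (M : Matroid α) (hfin : M.E.Finite) (r : ℕ)
    (hrank : mrk M = r) (E₁ E₂ : Set α) (a₁ a₂ : ℕ)
    (hgood : IsGoodPartition2 M r E₁ E₂ a₁ a₂) :
    IsBaseCollection M.E {B | M.IsBase B ∧ (B ∩ E₁).ncard ≤ a₁} ∧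
    IsBaseCollection M.E {B | M.IsBase B ∧ (B ∩ E₂).ncard ≤ a₂} := by
  obtain ⟨hE, hdisj, h1, h2, ha1, ha1', ha2, ha2', hr, hP2⟩ := hgood
  refine ⟨good_aux hfin r hrank E₁ E₂ a₁ a₂
      ⟨hE, hdisj, h1, h2, ha1, ha1', ha2, ha2', hr, hP2⟩,
    good_aux hfin r hrank E₂ E₁ a₂ a₁
      ⟨by rw [union_comm]; exact hE, hdisj.symm, h2, h1, ha2, ha2', ha1, ha1', by omega, ?_⟩⟩
  intro X Y hX hXa hY hYa
  rw [union_comm]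
  exact hP2 Y X hY hYa hX hXa
end

section
/- Let M be a matroid of rank r on E = {1,…,n} and let E = E_1 ∪ E_2 be a good 2-partition of M with associated integers a_1, a_2. Let M_1 and M_2 be the matroids on E whose bases are B(M_1) = {B a base of M : |B ∩ E_1| ≤ a_1} and B(M_2) = {B a base of M : |B ∩ E_2| ≤ a_2}. Then P(M) = P(M_1) ∪ P(M_2) is a hyperplane split of P(M): P(M_1) and P(M_2) are proper subsets of P(M) whose union is P(M), and P(M_1) ∩ P(M_2) is a face of both P(M_1) and P(M_2) and is itself a matroid base polytope. -/
open Matroid Set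

/-- The 0/1 incidence vector of a set. -/
noncomputable def incVec {α : Type*} (B : Set α) : α → ℝ := B.indicator 1

/-- The matroid base polytope: the convex hull of the incidence vectors of the bases. -/
noncomputable def basePolytope {α : Type*} (M : Matroid α) : Set (α → ℝ) :=
  convexHull ℝ {x | ∃ B, M.IsBase B ∧ x = incVec B}

namespace SplitAux

variable {n : ℕ}

lemma base_ncard_eq_mrk {M : Matroid (Fin n)} {B : Set (Fin n)} (hB : M.IsBase B) :
    B.ncard = mrk M := by
  have hub : ∀ m ∈ {k : ℕ | ∃ I, M.Indep I ∧ I.ncard = k}, m ≤ B.ncard := by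
    rintro m ⟨I, hI, rfl⟩
    obtain ⟨B', hB', hIB'⟩ := hI.exists_isBase_superset
    calc I.ncard ≤ B'.ncard := Set.ncard_le_ncard hIB' B'.toFinite
    _ = B.ncard := hB'.ncard_eq_ncard_of_isBase hB
  have hmem : B.ncard ∈ {k : ℕ | ∃ I, M.Indep I ∧ I.ncard = k} := ⟨B, hB.indep, rfl⟩
  exact le_antisymm (le_csSup ⟨B.ncard, hub⟩ hmem) (csSup_le ⟨_, hmem⟩ hub)

lemma base_of_indep_ncard {M : Matroid (Fin n)} {I : Set (Fin n)} (hI : M.Indep I)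
    (h : I.ncard = mrk M) : M.IsBase I := by
  obtain ⟨B, hB, hIB⟩ := hI.exists_isBase_superset
  have hIB' : I = B :=
    Set.eq_of_subset_of_ncard_le hIB (by rw [h, base_ncard_eq_mrk hB]) B.toFinite
  rwa [hIB']

lemma exists_indep_of_lt_mrk {M : Matroid (Fin n)} {E' : Set (Fin n)} {a : ℕ}
    (h : a < mrk (M ↾ E')) : ∃ X, M.Indep X ∧ X ⊆ E' ∧ X.ncard = a + 1 := by
  have h' : a < sSup {k : ℕ | ∃ I, (M ↾ E').Indep I ∧ I.ncard = k} := h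
  obtain ⟨m, ⟨I, hI, rfl⟩, hm⟩ :=
    exists_lt_of_lt_csSup ⟨0, by exact ⟨∅, (M ↾ E').empty_indep, by simp⟩⟩ h'
  obtain ⟨X, hXI, hX⟩ := Set.exists_subset_card_eq (show a + 1 ≤ I.ncard from hm)
  rw [Matroid.restrict_indep_iff] at hI
  exact ⟨X, hI.1.subset hXI, hXI.trans hI.2, hX⟩

lemma exists_minimal_closure_subset {M : Matroid (Fin n)} {B' : Set (Fin n)} {a : Fin n}
    (h : a ∈ M.closure B') :
    ∃ S, S ⊆ B' ∧ a ∈ M.closure S ∧ ∀ b ∈ S, a ∉ M.closure (S \ {b}) := by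
  have hfin : {S : Set (Fin n) | S ⊆ B' ∧ a ∈ M.closure S}.Finite := Set.toFinite _
  obtain ⟨S, hS, hmin⟩ := hfin.exists_minimal ⟨B', Subset.rfl, h⟩
  refine ⟨S, hS.1, hS.2, fun b hb hcl => ?_⟩
  have heq : id S = id (S \ {b}) := subset_antisymm (hmin ⟨diff_subset.trans hS.1, hcl⟩ diff_subset) diff_subset
  simp only [id] at heq
  have : b ∈ S \ {b} := heq ▸ hb
  exact this.2 rfl

lemma sym_exchange {M : Matroid (Fin n)} {B B' : Set (Fin n)} {a : Fin n}
    (hB : M.IsBase B) (hB' : M.IsBase B') (haB : a ∈ B) (haB' : a ∉ B') :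
    ∃ b, b ∈ B' ∧ b ∉ B ∧ M.IsBase (insert b (B \ {a})) ∧ M.IsBase (insert a (B' \ {b})) := by
  have haE : a ∈ M.E := hB.subset_ground haB
  have hacl : a ∈ M.closure B' := by rw [hB'.closure_eq]; exact haE
  obtain ⟨S, hSB', hScl, hmin⟩ := exists_minimal_closure_subset hacl
  have haH : a ∉ M.closure (B \ {a}) := hB.indep.notMem_closure_diff_of_mem haB
  have hSnotsub : ¬ S ⊆ M.closure (B \ {a}) := fun hsub =>
    haH ((M.closure_subset_closure_of_subset_closure hsub) hScl)
  obtain ⟨b, hbS, hbH⟩ := not_subset.mp hSnotsub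
  have hbB' : b ∈ B' := hSB' hbS
  have hba : b ≠ a := fun h => haB' (h ▸ hbB')
  have hbB : b ∉ B := fun hbB =>
    hbH (M.subset_closure _ (diff_subset.trans hB.subset_ground) ⟨hbB, hba⟩)
  have hbE : b ∈ M.E := hB'.subset_ground hbB'
  -- first swap
  have hind1 : M.Indep (insert b (B \ {a})) :=
    (((hB.indep.subset diff_subset).notMem_closure_iff hbE).mp hbH).1
  have hbase1 : M.IsBase (insert b (B \ {a})) := hB.exchange_isBase_of_indep hbB hind1
  -- a ∉ cl (B' \ {b})
  have hnacl : a ∉ M.closure (B' \ {b}) := by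
    intro hacl'
    have h1 : a ∉ M.closure (S \ {b}) := hmin b hbS
    have h2 : a ∈ M.closure (insert b (S \ {b})) := by
      rwa [insert_diff_singleton, insert_eq_of_mem hbS]
    have h3 : b ∈ M.closure (insert a (S \ {b})) := Matroid.mem_closure_insert h1 h2
    have h4 : insert a (S \ {b}) ⊆ M.closure (B' \ {b}) := by
      rintro x hx
      rcases hx with rfl | hx
      · exact hacl'
      · exact M.subset_closure _ (diff_subset.trans hB'.subset_ground)
          (diff_subset_diff_left hSB' hx)
    have h5 : b ∈ M.closure (B' \ {b}) :=
      (M.closure_subset_closure_of_subset_closure h4) h3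
    exact hB'.indep.notMem_closure_diff_of_mem hbB' h5
  have hind2 : M.Indep (insert a (B' \ {b})) :=
    (((hB'.indep.subset diff_subset).notMem_closure_iff haE).mp hnacl).1
  exact ⟨b, hbB', hbB, hbase1, hB'.exchange_isBase_of_indep haB' hind2⟩

open Classical in
noncomputable def sumOn (E' : Set (Fin n)) : (Fin n → ℝ) →L[ℝ] ℝ :=
  LinearMap.toContinuousLinearMap
    { toFun := fun x => ∑ i, if i ∈ E' then x i else 0
      map_add' := by
        intro x y
        rw [← Finset.sum_add_distrib]
        refine Finset.sum_congr rfl fun i _ => ?_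
        by_cases h : i ∈ E' <;> simp [h]
      map_smul' := by
        intro c x
        simp only [RingHom.id_apply, smul_eq_mul]
        rw [Finset.mul_sum]
        refine Finset.sum_congr rfl fun i _ => ?_
        by_cases h : i ∈ E' <;> simp [h, mul_comm] }

open Classical in
lemma sumOn_apply (E' : Set (Fin n)) (x : Fin n → ℝ) :
    sumOn E' x = ∑ i, if i ∈ E' then x i else 0 := rfl

open Classical in
lemma sumOn_incVec (E' B : Set (Fin n)) :
    sumOn E' (incVec B) = ((B ∩ E').ncard : ℝ) := by
  rw [sumOn_apply]
  have h1 : ∀ i, (if i ∈ E' then (incVec B) i else 0) = if i ∈ B ∩ E' then (1:ℝ) else 0 := by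
    intro i
    by_cases h1 : i ∈ E' <;> by_cases h2 : i ∈ B <;>
      simp [incVec, Set.indicator_apply, h1, h2]
  rw [Finset.sum_congr rfl (fun i _ => h1 i), Finset.sum_boole]
  congr 1
  rw [Set.ncard_eq_toFinset_card']
  congr 1
  ext i
  simp

lemma sumOn_split {E₁ E₂ : Set (Fin n)} (hdisj : Disjoint E₁ E₂) (hun : E₁ ∪ E₂ = univ)
    (x : Fin n → ℝ) : sumOn E₁ x + sumOn E₂ x = sumOn univ x := by
  classical
  rw [sumOn_apply, sumOn_apply, sumOn_apply, ← Finset.sum_add_distrib]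
  refine Finset.sum_congr rfl fun i _ => ?_
  have hi : i ∈ E₁ ∪ E₂ := hun ▸ mem_univ i
  rcases hi with h1 | h2
  · have h2 : i ∉ E₂ := fun h => (hdisj.ne_of_mem h1 h) rfl
    simp [h1, h2]
  · have h1 : i ∉ E₁ := fun h => (hdisj.ne_of_mem h h2) rfl
    simp [h1, h2]

lemma incVec_exchange_sum {B B' : Set (Fin n)} {a b : Fin n}
    (haB : a ∈ B) (haB' : a ∉ B') (hbB : b ∉ B) (hbB' : b ∈ B') :
    incVec (insert b (B \ {a})) + incVec (insert a (B' \ {b})) = incVec B + incVec B' := by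
  have hab : a ≠ b := fun h => hbB (h ▸ haB)
  funext i
  simp only [Pi.add_apply, incVec, Set.indicator_apply, Pi.one_apply,
    Set.mem_insert_iff, Set.mem_diff, Set.mem_singleton_iff]
  rcases eq_or_ne i a with rfl | hia
  · simp [hab, haB, haB']
  · rcases eq_or_ne i b with rfl | hib
    · simp [hbB, hbB', (Ne.symm hab)]
    · by_cases h1 : i ∈ B <;> by_cases h2 : i ∈ B' <;> simp [h1, h2, hia, hib]

lemma hull_le {S : Set (Fin n → ℝ)} {φ : (Fin n → ℝ) →L[ℝ] ℝ} {c : ℝ}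
    (h : ∀ y ∈ S, φ y ≤ c) {x : Fin n → ℝ} (hx : x ∈ convexHull ℝ S) : φ x ≤ c := by
  have hsub : convexHull ℝ S ⊆ {y | φ y ≤ c} :=
    convexHull_min h (convex_halfSpace_le ⟨φ.map_add, fun r y => φ.map_smul r y⟩ c)
  exact hsub hx

lemma hull_ge {S : Set (Fin n → ℝ)} {φ : (Fin n → ℝ) →L[ℝ] ℝ} {c : ℝ}
    (h : ∀ y ∈ S, c ≤ φ y) {x : Fin n → ℝ} (hx : x ∈ convexHull ℝ S) : c ≤ φ x := by
  have h' : ∀ y ∈ S, (-φ) y ≤ -c := fun y hy => by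
    simp only [ContinuousLinearMap.neg_apply]; linarith [h y hy]
  have := hull_le h' hx
  simp only [ContinuousLinearMap.neg_apply] at this
  linarith

lemma hull_eqc {S : Set (Fin n → ℝ)} {φ : (Fin n → ℝ) →L[ℝ] ℝ} {c : ℝ}
    (h : ∀ y ∈ S, φ y = c) {x : Fin n → ℝ} (hx : x ∈ convexHull ℝ S) : φ x = c :=
  le_antisymm (hull_le (fun y hy => (h y hy).le) hx) (hull_ge (fun y hy => (h y hy).ge) hx)

lemma mem_hull_of_forall_le {S : Set (Fin n → ℝ)} (hS : S.Finite) {x : Fin n → ℝ}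
    (h : ∀ φ : (Fin n → ℝ) →L[ℝ] ℝ, ∃ y ∈ S, φ x ≤ φ y) : x ∈ convexHull ℝ S := by
  by_contra hx
  obtain ⟨f, u, hfu, hux⟩ := geometric_hahn_banach_closed_point
    (convex_convexHull ℝ S) ((hS.isCompact_convexHull (𝕜 := ℝ)).isClosed) hx
  obtain ⟨y, hyS, hxy⟩ := h f
  exact absurd (hxy.trans_lt (hfu y (subset_convexHull ℝ S hyS))) (not_lt.mpr hux.le)


lemma interval_lemma {M : Matroid (Fin n)} (E' : Set (Fin n))
    (φ : (Fin n → ℝ) →L[ℝ] ℝ) (c : ℝ)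
    (hub : ∀ B, M.IsBase B → φ (incVec B) ≤ c) :
    ∀ (k : ℕ) (B B' : Set (Fin n)), (B' \ B).ncard ≤ k → M.IsBase B → M.IsBase B' →
      φ (incVec B) = c → φ (incVec B') = c → ∀ j : ℕ, (B ∩ E').ncard ≤ j →
      j ≤ (B' ∩ E').ncard → ∃ D, M.IsBase D ∧ φ (incVec D) = c ∧ (D ∩ E').ncard = j := by
  intro k
  induction k with
  | zero =>
    intro B B' hk hB hB' hvB hvB' j hj1 hj2
    have hdiff : B' \ B = ∅ := by
      have := Set.ncard_eq_zero (s := B' \ B) (Set.toFinite _)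
      exact this.mp (by omega)
    have hsub : B' = B := hB'.eq_of_subset_isBase hB (diff_eq_empty.mp hdiff)
    refine ⟨B, hB, hvB, ?_⟩
    rw [hsub] at hj2
    omega
  | succ k ih =>
    intro B B' hk hB hB' hvB hvB' j hj1 hj2
    rcases eq_or_lt_of_le hj2 with he | hlt
    · exact ⟨B', hB', hvB', he.symm⟩
    rcases eq_or_lt_of_le hj1 with he | hlt2
    · exact ⟨B, hB, hvB, he⟩
    have hcardlt : (B ∩ E').ncard < (B' ∩ E').ncard := lt_trans hlt2 hlt
    obtain ⟨a, haB', haB⟩ := Set.exists_mem_notMem_of_ncard_lt_ncard hcardlt (Set.toFinite _)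
    have haB2 : a ∉ B := fun h => haB ⟨h, haB'.2⟩
    obtain ⟨b, hbB, hbB', hDbase, hD'base⟩ := sym_exchange hB' hB haB'.1 haB2
    set D := insert b (B' \ {a}) with hDdef
    set D' := insert a (B \ {b}) with hD'def
    have hsum := congrArg φ (incVec_exchange_sum haB'.1 haB2 hbB' hbB)
    rw [φ.map_add, φ.map_add] at hsum
    have hφD : φ (incVec D) = c := by
      have h1 := hub D hDbase
      have h2 := hub D' hD'base
      have h3 : φ (incVec D) + φ (incVec D') = c + c := by rw [hsum, hvB', hvB]
      linarith
    have haB'B : a ∈ B' \ B := ⟨haB'.1, haB2⟩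
    have hDdiff : D \ B = (B' \ B) \ {a} := by
      ext i
      simp only [hDdef, Set.mem_diff, Set.mem_insert_iff, Set.mem_singleton_iff]
      constructor
      · rintro ⟨rfl | ⟨hiB', hia⟩, hiB⟩
        · exact absurd hbB hiB
        · exact ⟨⟨hiB', hiB⟩, hia⟩
      · rintro ⟨⟨hiB', hiB⟩, hia⟩
        exact ⟨Or.inr ⟨hiB', hia⟩, hiB⟩
    have hkD : (D \ B).ncard ≤ k := by
      rw [hDdiff]
      have := Set.ncard_diff_singleton_add_one haB'B (Set.toFinite _)
      omega
    have hDj : j ≤ (D ∩ E').ncard := by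
      by_cases hbE' : b ∈ E'
      · have hDE : D ∩ E' = insert b ((B' ∩ E') \ {a}) := by
          ext i
          simp only [hDdef, Set.mem_inter_iff, Set.mem_insert_iff, Set.mem_diff,
            Set.mem_singleton_iff]
          constructor
          · rintro ⟨rfl | ⟨hiB', hia⟩, hiE⟩
            · exact Or.inl rfl
            · exact Or.inr ⟨⟨hiB', hiE⟩, hia⟩
          · rintro (rfl | ⟨⟨hiB', hiE⟩, hia⟩)
            · exact ⟨Or.inl rfl, hbE'⟩
            · exact ⟨Or.inr ⟨hiB', hia⟩, hiE⟩
        rw [hDE, Set.ncard_insert_of_notMem (fun h => hbB' h.1.1) (Set.toFinite _)]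
        have := Set.ncard_diff_singleton_add_one (show a ∈ B' ∩ E' from haB') (Set.toFinite _)
        omega
      · have hDE : D ∩ E' = (B' ∩ E') \ {a} := by
          ext i
          simp only [hDdef, Set.mem_inter_iff, Set.mem_insert_iff, Set.mem_diff,
            Set.mem_singleton_iff]
          constructor
          · rintro ⟨rfl | ⟨hiB', hia⟩, hiE⟩
            · exact absurd hiE hbE'
            · exact ⟨⟨hiB', hiE⟩, hia⟩
          · rintro ⟨⟨hiB', hiE⟩, hia⟩
            exact ⟨Or.inr ⟨hiB', hia⟩, hiE⟩
        rw [hDE]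
        have := Set.ncard_diff_singleton_add_one (show a ∈ B' ∩ E' from haB') (Set.toFinite _)
        omega
    exact ih B D hkD hB hDbase hvB hφD j hj1 hDj

lemma cross_ident (wB wD sB sD t : ℝ) (h : sB ≠ sD) :
    (wB + t * sB) - (wD + t * sD) = (sD - sB) * ((wB - wD) / (sD - sB) - t) := by
  have hne : sD - sB ≠ 0 := sub_ne_zero.mpr (Ne.symm h)
  field_simp
  ring

lemma down_right {ι : Type*} (s : Finset ι) (hs : s.Nonempty) (w sl : ι → ℝ)
    (TT : Finset ℝ) (t₀ : ℝ)
    (hTT : ∀ B ∈ s, ∀ D ∈ s, sl B ≠ sl D → t₀ < (w B - w D) / (sl D - sl B) →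
      (w B - w D) / (sl D - sl B) ∈ TT)
    {i₀ : ι} (hi₀ : i₀ ∈ s) (hsl0 : sl i₀ = 0)
    (hall : ∀ A ∈ s, s.sup' hs (fun B => w B + t₀ * sl B) = w A + t₀ * sl A → sl A < 0) :
    ∃ t' ∈ TT, t₀ < t' ∧
      s.sup' hs (fun B => w B + t' * sl B) < s.sup' hs (fun B => w B + t₀ * sl B) := by
  obtain ⟨A, hA, hAeq⟩ := s.exists_mem_eq_sup' hs (fun B => w B + t₀ * sl B)
  have hslA : sl A < 0 := hall A hA hAeq
  have hψle : ∀ t, ∀ B ∈ s, w B + t * sl B ≤ s.sup' hs (fun B => w B + t * sl B) :=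
    fun t B hB => Finset.le_sup' (fun B => w B + t * sl B) hB
  have hi₀lt : w i₀ + t₀ * sl i₀ < w A + t₀ * sl A := by
    rcases eq_or_lt_of_le ((hψle t₀ i₀ hi₀).trans_eq hAeq) with he | hlt
    · exact absurd (hall i₀ hi₀ (hAeq.trans he.symm)) (by rw [hsl0]; exact lt_irrefl 0)
    · exact hlt
  have hslne₀ : sl A ≠ sl i₀ := by rw [hsl0]; exact ne_of_lt hslA
  have hid₀ : ∀ t, (w A + t * sl A) - (w i₀ + t * sl i₀) =
      (sl i₀ - sl A) * ((w A - w i₀) / (sl i₀ - sl A) - t) :=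
    fun t => cross_ident _ _ _ _ t hslne₀
  have hpos₀ : 0 < sl i₀ - sl A := by rw [hsl0]; linarith
  have htc₁ : t₀ < (w A - w i₀) / (sl i₀ - sl A) := by nlinarith [hid₀ t₀]
  have htc₁TT := hTT A hA i₀ hi₀ hslne₀ htc₁
  have hUne : (TT.filter (fun t => t₀ < t)).Nonempty :=
    ⟨_, Finset.mem_filter.mpr ⟨htc₁TT, htc₁⟩⟩
  obtain ⟨t₂, ht₂U, ht₂min⟩ := (TT.filter (fun t => t₀ < t)).exists_min_image id hUne
  obtain ⟨ht₂TT, ht₂gt⟩ := Finset.mem_filter.mp ht₂U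
  refine ⟨t₂, ht₂TT, ht₂gt, ?_⟩
  obtain ⟨D, hD, hDeq⟩ := s.exists_mem_eq_sup' hs (fun B => w B + t₂ * sl B)
  rw [hDeq, hAeq]
  have hDle₀ : w D + t₀ * sl D ≤ w A + t₀ * sl A := (hψle t₀ D hD).trans_eq hAeq
  rcases lt_or_ge (sl D) 0 with hslD | hslD
  · nlinarith
  · have hDlt₀ : w D + t₀ * sl D < w A + t₀ * sl A := by
      rcases eq_or_lt_of_le hDle₀ with he | hlt
      · exact absurd (hall D hD (hAeq.trans he.symm)) (not_lt.mpr hslD)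
      · exact hlt
    have hslne : sl A ≠ sl D := ne_of_lt (lt_of_lt_of_le hslA hslD)
    have hid : ∀ t, (w A + t * sl A) - (w D + t * sl D) =
        (sl D - sl A) * ((w A - w D) / (sl D - sl A) - t) :=
      fun t => cross_ident _ _ _ _ t hslne
    have hpos2 : 0 < sl D - sl A := by linarith
    have h9 : t₀ < (w A - w D) / (sl D - sl A) := by nlinarith [hid t₀]
    have h10 : w A + t₂ * sl A ≤ w D + t₂ * sl D := (hψle t₂ A hA).trans_eq hDeq
    have h11 : (w A - w D) / (sl D - sl A) ≤ t₂ := by nlinarith [hid t₂]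
    have h13 : t₂ ≤ (w A - w D) / (sl D - sl A) :=
      ht₂min _ (Finset.mem_filter.mpr ⟨hTT A hA D hD hslne h9, h9⟩)
    have h15 : w D + t₂ * sl D = w A + t₂ * sl A := by nlinarith [hid t₂]
    nlinarith

lemma down_left {ι : Type*} (s : Finset ι) (hs : s.Nonempty) (w sl : ι → ℝ)
    (TT : Finset ℝ) (t₀ : ℝ)
    (hTT : ∀ B ∈ s, ∀ D ∈ s, sl B ≠ sl D → (w B - w D) / (sl D - sl B) < t₀ →
      (∃ u ∈ TT, u ≤ (w B - w D) / (sl D - sl B)) → (w B - w D) / (sl D - sl B) ∈ TT)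
    (hpred : ∃ tp ∈ TT, tp < t₀)
    (hall : ∀ A ∈ s, s.sup' hs (fun B => w B + t₀ * sl B) = w A + t₀ * sl A → 0 < sl A) :
    ∃ t' ∈ TT, t' < t₀ ∧
      s.sup' hs (fun B => w B + t' * sl B) < s.sup' hs (fun B => w B + t₀ * sl B) := by
  obtain ⟨A, hA, hAeq⟩ := s.exists_mem_eq_sup' hs (fun B => w B + t₀ * sl B)
  have hslA : 0 < sl A := hall A hA hAeq
  have hψle : ∀ t, ∀ B ∈ s, w B + t * sl B ≤ s.sup' hs (fun B => w B + t * sl B) :=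
    fun t B hB => Finset.le_sup' (fun B => w B + t * sl B) hB
  obtain ⟨tp, htpTT, htplt⟩ := hpred
  have hUne : (TT.filter (fun t => t < t₀)).Nonempty :=
    ⟨tp, Finset.mem_filter.mpr ⟨htpTT, htplt⟩⟩
  obtain ⟨t₂, ht₂U, ht₂max⟩ := (TT.filter (fun t => t < t₀)).exists_max_image id hUne
  obtain ⟨ht₂TT, ht₂lt⟩ := Finset.mem_filter.mp ht₂U
  refine ⟨t₂, ht₂TT, ht₂lt, ?_⟩
  obtain ⟨D, hD, hDeq⟩ := s.exists_mem_eq_sup' hs (fun B => w B + t₂ * sl B)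
  rw [hDeq, hAeq]
  have hDle₀ : w D + t₀ * sl D ≤ w A + t₀ * sl A := (hψle t₀ D hD).trans_eq hAeq
  rcases lt_or_ge 0 (sl D) with hslD | hslD
  · nlinarith
  · have hDlt₀ : w D + t₀ * sl D < w A + t₀ * sl A := by
      rcases eq_or_lt_of_le hDle₀ with he | hlt
      · exact absurd (hall D hD (hAeq.trans he.symm)) (not_lt.mpr hslD)
      · exact hlt
    have hslne : sl A ≠ sl D := ne_of_gt (lt_of_le_of_lt hslD hslA)
    have hid : ∀ t, (w A + t * sl A) - (w D + t * sl D) =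
        (sl D - sl A) * ((w A - w D) / (sl D - sl A) - t) :=
      fun t => cross_ident _ _ _ _ t hslne
    have hneg2 : sl D - sl A < 0 := by linarith
    have h9 : (w A - w D) / (sl D - sl A) < t₀ := by nlinarith [hid t₀]
    have h10 : w A + t₂ * sl A ≤ w D + t₂ * sl D := (hψle t₂ A hA).trans_eq hDeq
    have h11 : t₂ ≤ (w A - w D) / (sl D - sl A) := by nlinarith [hid t₂]
    have h12 : (w A - w D) / (sl D - sl A) ∈ TT :=
      hTT A hA D hD hslne h9 ⟨t₂, ht₂TT, h11⟩
    have h13 : (w A - w D) / (sl D - sl A) ≤ t₂ :=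
      ht₂max _ (Finset.mem_filter.mpr ⟨h12, h9⟩)
    have h15 : w D + t₂ * sl D = w A + t₂ * sl A := by nlinarith [hid t₂]
    nlinarith

lemma key_lemma {M : Matroid (Fin n)} (E' : Set (Fin n)) (a : ℕ)
    (hex : ∃ B₀, M.IsBase B₀ ∧ (B₀ ∩ E').ncard = a)
    (φ : (Fin n → ℝ) →L[ℝ] ℝ) :
    ∃ (t : ℝ) (D : Set (Fin n)), M.IsBase D ∧ (D ∩ E').ncard = a ∧
      ∀ B, M.IsBase B →
        φ (incVec B) + t * ((a : ℝ) - ((B ∩ E').ncard : ℝ)) ≤ φ (incVec D) := by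
  classical
  obtain ⟨B₀, hB₀, hB₀a⟩ := hex
  set w : Set (Fin n) → ℝ := fun B => φ (incVec B) with hw
  set sl : Set (Fin n) → ℝ := fun B => (a : ℝ) - ((B ∩ E').ncard : ℝ) with hsl
  set 𝔅 : Finset (Set (Fin n)) := (Set.toFinite {B | M.IsBase B}).toFinset with h𝔅
  have hmem𝔅 : ∀ B, B ∈ 𝔅 ↔ M.IsBase B := fun B => by
    simp [h𝔅, Set.Finite.mem_toFinset]
  have hne : 𝔅.Nonempty := ⟨B₀, (hmem𝔅 _).mpr hB₀⟩
  set TT : Finset ℝ :=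
    insert (0:ℝ) (Finset.image₂ (fun B D => (w B - w D) / (sl D - sl B)) 𝔅 𝔅) with hTTdef
  have hTTmem : ∀ B ∈ 𝔅, ∀ D ∈ 𝔅, (w B - w D) / (sl D - sl B) ∈ TT := fun B hB D hD =>
    Finset.mem_insert_of_mem (Finset.mem_image₂_of_mem hB hD)
  have hTTne : TT.Nonempty := ⟨0, Finset.mem_insert_self 0 _⟩
  set g : ℝ → ℝ := fun t => 𝔅.sup' hne (fun B => w B + t * sl B) with hg
  obtain ⟨t₀, ht₀TT, ht₀min⟩ := TT.exists_min_image g hTTne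
  have hgle : ∀ t, ∀ B, M.IsBase B → w B + t * sl B ≤ g t := fun t B hB =>
    Finset.le_sup' (fun B => w B + t * sl B) ((hmem𝔅 B).mpr hB)
  have hsl0a : ∀ D : Set (Fin n), sl D = 0 → (D ∩ E').ncard = a := by
    intro D hD
    simp only [hsl] at hD
    have : ((D ∩ E').ncard : ℝ) = (a : ℝ) := by linarith
    exact_mod_cast this
  by_cases h0 : ∃ D ∈ 𝔅, g t₀ = w D + t₀ * sl D ∧ sl D = 0
  · obtain ⟨D, hD𝔅, hDeq, hDsl⟩ := h0
    refine ⟨t₀, D, (hmem𝔅 D).mp hD𝔅, hsl0a D hDsl, fun B hB => ?_⟩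
    have h1 : w B + t₀ * sl B ≤ g t₀ := hgle t₀ B hB
    rw [hDeq, hDsl] at h1
    simpa [hw, hsl] using h1
  · by_cases hneg : ∃ A ∈ 𝔅, g t₀ = w A + t₀ * sl A ∧ sl A < 0
    · by_cases hpos : ∃ C ∈ 𝔅, g t₀ = w C + t₀ * sl C ∧ 0 < sl C
      · -- mixed case : use interval lemma
        obtain ⟨A, hA𝔅, hAeq, hAsl⟩ := hneg
        obtain ⟨C, hC𝔅, hCeq, hCsl⟩ := hpos
        have hA : M.IsBase A := (hmem𝔅 A).mp hA𝔅
        have hC : M.IsBase C := (hmem𝔅 C).mp hC𝔅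
        set L : (Fin n → ℝ) →L[ℝ] ℝ := φ - t₀ • (sumOn E') with hL
        have hLB : ∀ B : Set (Fin n), L (incVec B) = w B - t₀ * ((B ∩ E').ncard : ℝ) := by
          intro B
          simp [hL, hw, ContinuousLinearMap.sub_apply, ContinuousLinearMap.smul_apply,
            smul_eq_mul, sumOn_incVec]
        set c : ℝ := g t₀ - t₀ * (a : ℝ) with hc
        have hub : ∀ B, M.IsBase B → L (incVec B) ≤ c := by
          intro B hB
          have h2 := hgle t₀ B hB
          rw [hsl] at h2
          have h3 : t₀ * ((a:ℝ) - ((B ∩ E').ncard : ℝ))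
              = t₀ * (a:ℝ) - t₀ * ((B ∩ E').ncard : ℝ) := by ring
          rw [hLB, hc]
          simp only [hw] at h2 ⊢
          linarith
        have hLA : L (incVec A) = c := by
          rw [hLB, hc, hAeq, hsl]; ring
        have hLC : L (incVec C) = c := by
          rw [hLB, hc, hCeq, hsl]; ring
        have hfA : a < (A ∩ E').ncard := by
          have : (a : ℝ) < ((A ∩ E').ncard : ℝ) := by simp only [hsl] at hAsl; linarith
          exact_mod_cast this
        have hfC : (C ∩ E').ncard < a := by
          have : ((C ∩ E').ncard : ℝ) < (a : ℝ) := by simp only [hsl] at hCsl; linarith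
          exact_mod_cast this
        obtain ⟨D, hD, hLD, hDa⟩ := interval_lemma E' L c hub ((A \ C).ncard) C A le_rfl
          hC hA hLC hLA a hfC.le hfA.le
        refine ⟨t₀, D, hD, hDa, fun B hB => ?_⟩
        have h1 : w B + t₀ * sl B ≤ g t₀ := hgle t₀ B hB
        have h4 : w D = g t₀ := by
          rw [hLB, hDa] at hLD
          rw [hc] at hLD
          linarith
        rw [hsl] at h1
        simp only [hw] at h1 h4 ⊢
        linarith
      · -- all actives have sl < 0 : contradiction via down_right
        push_neg at h0 hpos
        have hall : ∀ A ∈ 𝔅, g t₀ = w A + t₀ * sl A → sl A < 0 := by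
          intro A hA hAeq
          rcases lt_trichotomy (sl A) 0 with h | h | h
          · exact h
          · exact absurd h (h0 A hA hAeq)
          · exact absurd h (not_lt.mpr (hpos A hA hAeq))
        have hB₀sl : sl B₀ = 0 := by simp [hsl, hB₀a]
        obtain ⟨t', ht'TT, _, hlt⟩ := down_right 𝔅 hne w sl TT t₀
          (fun B hB D hD hne' _ => hTTmem B hB D hD) ((hmem𝔅 B₀).mpr hB₀) hB₀sl hall
        exact absurd (ht₀min t' ht'TT) (not_le.mpr hlt)
    · -- all actives have sl > 0 : contradiction via down_left
      push_neg at h0 hneg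
      have hall : ∀ A ∈ 𝔅, g t₀ = w A + t₀ * sl A → 0 < sl A := by
        intro A hA hAeq
        rcases lt_trichotomy (sl A) 0 with h | h | h
        · exact absurd h (not_lt.mpr (hneg A hA hAeq))
        · exact absurd h (h0 A hA hAeq)
        · exact h
      have hB₀sl : sl B₀ = 0 := by simp [hsl, hB₀a]
      have hB₀𝔅 : B₀ ∈ 𝔅 := (hmem𝔅 B₀).mpr hB₀
      -- construct predecessor via crossing of an active with B₀
      obtain ⟨A, hA𝔅, hAeq⟩ := 𝔅.exists_mem_eq_sup' hne (fun B => w B + t₀ * sl B)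
      have hslA : 0 < sl A := hall A hA𝔅 hAeq
      have hB₀lt : w B₀ + t₀ * sl B₀ < w A + t₀ * sl A := by
        rcases eq_or_lt_of_le ((Finset.le_sup' (fun B => w B + t₀ * sl B) hB₀𝔅).trans_eq hAeq)
          with he | hlt
        · exact absurd hB₀sl (h0 B₀ hB₀𝔅 (hAeq.trans he.symm))
        · exact hlt
      have hslne : sl A ≠ sl B₀ := by rw [hB₀sl]; exact ne_of_gt hslA
      have hid : (w A + t₀ * sl A) - (w B₀ + t₀ * sl B₀) =
          (sl B₀ - sl A) * ((w A - w B₀) / (sl B₀ - sl A) - t₀) :=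
        cross_ident _ _ _ _ t₀ hslne
      have hneg2 : sl B₀ - sl A < 0 := by rw [hB₀sl]; linarith
      have htclt : (w A - w B₀) / (sl B₀ - sl A) < t₀ := by
        by_contra hge
        push_neg at hge
        have h1 : (sl B₀ - sl A) * ((w A - w B₀) / (sl B₀ - sl A) - t₀) ≤ 0 :=
          mul_nonpos_iff.mpr (Or.inr ⟨hneg2.le, sub_nonneg.mpr hge⟩)
        have h2 : w A + t₀ * sl A - (w B₀ + t₀ * sl B₀) ≤ 0 := by rw [hid]; exact h1
        linarith
      have hpred : ∃ tp ∈ TT, tp < t₀ := ⟨_, hTTmem A hA𝔅 B₀ hB₀𝔅, htclt⟩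
      obtain ⟨t', ht'TT, _, hlt⟩ := down_left 𝔅 hne w sl TT t₀
        (fun B hB D hD hne' _ _ => hTTmem B hB D hD) hpred hall
      exact absurd (ht₀min t' ht'TT) (not_le.mpr hlt)

lemma key_lemma_le {M : Matroid (Fin n)} (E' : Set (Fin n)) (a : ℕ)
    (hex : ∃ B₀, M.IsBase B₀ ∧ (B₀ ∩ E').ncard = a)
    (φ : (Fin n → ℝ) →L[ℝ] ℝ) :
    ∃ (t : ℝ) (D : Set (Fin n)), 0 ≤ t ∧ M.IsBase D ∧ (D ∩ E').ncard ≤ a ∧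
      ∀ B, M.IsBase B →
        φ (incVec B) + t * ((a : ℝ) - ((B ∩ E').ncard : ℝ)) ≤ φ (incVec D) := by
  classical
  obtain ⟨B₀, hB₀, hB₀a⟩ := hex
  set w : Set (Fin n) → ℝ := fun B => φ (incVec B) with hw
  set sl : Set (Fin n) → ℝ := fun B => (a : ℝ) - ((B ∩ E').ncard : ℝ) with hsl
  set 𝔅 : Finset (Set (Fin n)) := (Set.toFinite {B | M.IsBase B}).toFinset with h𝔅
  have hmem𝔅 : ∀ B, B ∈ 𝔅 ↔ M.IsBase B := fun B => by
    simp [h𝔅, Set.Finite.mem_toFinset]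
  have hne : 𝔅.Nonempty := ⟨B₀, (hmem𝔅 _).mpr hB₀⟩
  set TT : Finset ℝ :=
    (insert (0:ℝ) (Finset.image₂ (fun B D => (w B - w D) / (sl D - sl B)) 𝔅 𝔅)).filter
      (fun t => 0 ≤ t) with hTTdef
  have hTT0 : (0:ℝ) ∈ TT := Finset.mem_filter.mpr ⟨Finset.mem_insert_self 0 _, le_refl 0⟩
  have hTTnonneg : ∀ t ∈ TT, (0:ℝ) ≤ t := fun t ht => (Finset.mem_filter.mp ht).2
  have hTTmem : ∀ B ∈ 𝔅, ∀ D ∈ 𝔅, 0 ≤ (w B - w D) / (sl D - sl B) →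
      (w B - w D) / (sl D - sl B) ∈ TT := fun B hB D hD hge =>
    Finset.mem_filter.mpr ⟨Finset.mem_insert_of_mem (Finset.mem_image₂_of_mem hB hD), hge⟩
  have hTTne : TT.Nonempty := ⟨0, hTT0⟩
  set g : ℝ → ℝ := fun t => 𝔅.sup' hne (fun B => w B + t * sl B) with hg
  obtain ⟨t₀, ht₀TT, ht₀min⟩ := TT.exists_min_image g hTTne
  have ht₀0 : 0 ≤ t₀ := hTTnonneg t₀ ht₀TT
  have hgle : ∀ t, ∀ B, M.IsBase B → w B + t * sl B ≤ g t := fun t B hB =>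
    Finset.le_sup' (fun B => w B + t * sl B) ((hmem𝔅 B).mpr hB)
  have hsl0a : ∀ D : Set (Fin n), sl D = 0 → (D ∩ E').ncard = a := by
    intro D hD
    simp only [hsl] at hD
    have : ((D ∩ E').ncard : ℝ) = (a : ℝ) := by linarith
    exact_mod_cast this
  by_cases h0 : ∃ D ∈ 𝔅, g t₀ = w D + t₀ * sl D ∧ sl D = 0
  · obtain ⟨D, hD𝔅, hDeq, hDsl⟩ := h0
    refine ⟨t₀, D, ht₀0, (hmem𝔅 D).mp hD𝔅, (hsl0a D hDsl).le, fun B hB => ?_⟩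
    have h1 : w B + t₀ * sl B ≤ g t₀ := hgle t₀ B hB
    rw [hDeq, hDsl] at h1
    simpa [hw, hsl] using h1
  · by_cases hneg : ∃ A ∈ 𝔅, g t₀ = w A + t₀ * sl A ∧ sl A < 0
    · by_cases hpos : ∃ C ∈ 𝔅, g t₀ = w C + t₀ * sl C ∧ 0 < sl C
      · -- mixed case : use interval lemma
        obtain ⟨A, hA𝔅, hAeq, hAsl⟩ := hneg
        obtain ⟨C, hC𝔅, hCeq, hCsl⟩ := hpos
        have hA : M.IsBase A := (hmem𝔅 A).mp hA𝔅
        have hC : M.IsBase C := (hmem𝔅 C).mp hC𝔅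
        set L : (Fin n → ℝ) →L[ℝ] ℝ := φ - t₀ • (sumOn E') with hL
        have hLB : ∀ B : Set (Fin n), L (incVec B) = w B - t₀ * ((B ∩ E').ncard : ℝ) := by
          intro B
          simp [hL, hw, ContinuousLinearMap.sub_apply, ContinuousLinearMap.smul_apply,
            smul_eq_mul, sumOn_incVec]
        set c : ℝ := g t₀ - t₀ * (a : ℝ) with hc
        have hub : ∀ B, M.IsBase B → L (incVec B) ≤ c := by
          intro B hB
          have h2 := hgle t₀ B hB
          rw [hsl] at h2
          have h3 : t₀ * ((a:ℝ) - ((B ∩ E').ncard : ℝ))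
              = t₀ * (a:ℝ) - t₀ * ((B ∩ E').ncard : ℝ) := by ring
          rw [hLB, hc]
          simp only [hw] at h2 ⊢
          linarith
        have hLA : L (incVec A) = c := by
          rw [hLB, hc, hAeq, hsl]; ring
        have hLC : L (incVec C) = c := by
          rw [hLB, hc, hCeq, hsl]; ring
        have hfA : a < (A ∩ E').ncard := by
          have : (a : ℝ) < ((A ∩ E').ncard : ℝ) := by simp only [hsl] at hAsl; linarith
          exact_mod_cast this
        have hfC : (C ∩ E').ncard < a := by
          have : ((C ∩ E').ncard : ℝ) < (a : ℝ) := by simp only [hsl] at hCsl; linarith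
          exact_mod_cast this
        obtain ⟨D, hD, hLD, hDa⟩ := interval_lemma E' L c hub ((A \ C).ncard) C A le_rfl
          hC hA hLC hLA a hfC.le hfA.le
        refine ⟨t₀, D, ht₀0, hD, hDa.le, fun B hB => ?_⟩
        have h1 : w B + t₀ * sl B ≤ g t₀ := hgle t₀ B hB
        have h4 : w D = g t₀ := by
          rw [hLB, hDa] at hLD
          rw [hc] at hLD
          linarith
        rw [hsl] at h1
        simp only [hw] at h1 h4 ⊢
        linarith
      · -- all actives have sl < 0 : contradiction via down_right
        push_neg at h0 hpos
        have hall : ∀ A ∈ 𝔅, g t₀ = w A + t₀ * sl A → sl A < 0 := by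
          intro A hA hAeq
          rcases lt_trichotomy (sl A) 0 with h | h | h
          · exact h
          · exact absurd h (h0 A hA hAeq)
          · exact absurd h (not_lt.mpr (hpos A hA hAeq))
        have hB₀sl : sl B₀ = 0 := by simp [hsl, hB₀a]
        obtain ⟨t', ht'TT, _, hlt⟩ := down_right 𝔅 hne w sl TT t₀
          (fun B hB D hD hne' hgt => hTTmem B hB D hD (le_of_lt (lt_of_le_of_lt ht₀0 hgt)))
          ((hmem𝔅 B₀).mpr hB₀) hB₀sl hall
        exact absurd (ht₀min t' ht'TT) (not_le.mpr hlt)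
    · -- all actives have sl > 0
      push_neg at h0 hneg
      have hall : ∀ A ∈ 𝔅, g t₀ = w A + t₀ * sl A → 0 < sl A := by
        intro A hA hAeq
        rcases lt_trichotomy (sl A) 0 with h | h | h
        · exact absurd h (not_lt.mpr (hneg A hA hAeq))
        · exact absurd h (h0 A hA hAeq)
        · exact h
      rcases eq_or_lt_of_le ht₀0 with h00 | ht₀pos
      · -- t₀ = 0 : max over all bases is attained at some D with sl D > 0, i.e. ncard < a
        subst h00
        obtain ⟨D, hD𝔅, hDeq⟩ := 𝔅.exists_mem_eq_sup' hne (fun B => w B + (0:ℝ) * sl B)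
        have hslD : 0 < sl D := hall D hD𝔅 hDeq
        have hfD : (D ∩ E').ncard ≤ a := by
          have : ((D ∩ E').ncard : ℝ) < (a : ℝ) := by simp only [hsl] at hslD; linarith
          exact_mod_cast this.le
        refine ⟨0, D, le_refl 0, (hmem𝔅 D).mp hD𝔅, hfD, fun B hB => ?_⟩
        have h1 : w B + (0:ℝ) * sl B ≤ w D + 0 * sl D := (hgle 0 B hB).trans_eq hDeq
        simp only [hw, zero_mul, add_zero] at h1 ⊢
        exact h1
      · -- t₀ > 0 : contradiction via down_left
        have hpred : ∃ tp ∈ TT, tp < t₀ := ⟨0, hTT0, ht₀pos⟩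
        obtain ⟨t', ht'TT, _, hlt⟩ := down_left 𝔅 hne w sl TT t₀
          (fun B hB D hD hne' _ hwit => by
            obtain ⟨u, huTT, hule⟩ := hwit
            exact hTTmem B hB D hD (le_trans (hTTnonneg u huTT) hule))
          hpred hall
        exact absurd (ht₀min t' ht'TT) (not_le.mpr hlt)

lemma core_le {M : Matroid (Fin n)} (E' : Set (Fin n)) (a : ℕ)
    (hex : ∃ B₀, M.IsBase B₀ ∧ (B₀ ∩ E').ncard = a)
    {x : Fin n → ℝ} (hx : x ∈ convexHull ℝ {y | ∃ B, M.IsBase B ∧ y = incVec B})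
    (hFx : sumOn E' x ≤ (a : ℝ)) :
    x ∈ convexHull ℝ {y | ∃ B, (M.IsBase B ∧ (B ∩ E').ncard ≤ a) ∧ y = incVec B} := by
  have hfin : {y | ∃ B, (M.IsBase B ∧ (B ∩ E').ncard ≤ a) ∧ y = incVec B}.Finite := by
    have hsub : {y | ∃ B, (M.IsBase B ∧ (B ∩ E').ncard ≤ a) ∧ y = incVec B}
        ⊆ incVec '' (Set.univ : Set (Set (Fin n))) := by
      rintro y ⟨B, _, rfl⟩; exact ⟨B, trivial, rfl⟩
    exact (Set.Finite.image _ (Set.toFinite _)).subset hsub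
  apply mem_hull_of_forall_le hfin
  intro φ
  obtain ⟨t, D, ht0, hD, hDa, hall⟩ := key_lemma_le E' a hex φ
  refine ⟨incVec D, ⟨D, ⟨hD, hDa⟩, rfl⟩, ?_⟩
  set L : (Fin n → ℝ) →L[ℝ] ℝ := φ - t • (sumOn E') with hL
  have hLy : ∀ y ∈ {y | ∃ B, M.IsBase B ∧ y = incVec B}, L y ≤ φ (incVec D) - t * (a:ℝ) := by
    rintro y ⟨B, hB, rfl⟩
    have h1 := hall B hB
    have h2 : L (incVec B) = φ (incVec B) - t * ((B ∩ E').ncard : ℝ) := by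
      simp [hL, sumOn_incVec, ContinuousLinearMap.sub_apply, ContinuousLinearMap.smul_apply,
        smul_eq_mul]
    rw [h2]
    have h3 : t * ((a:ℝ) - ((B ∩ E').ncard:ℝ)) = t * (a:ℝ) - t * ((B ∩ E').ncard:ℝ) := by ring
    linarith
  have h4 : L x ≤ φ (incVec D) - t * (a:ℝ) := hull_le hLy hx
  have h5 : L x = φ x - t * sumOn E' x := by
    simp [hL, ContinuousLinearMap.sub_apply, ContinuousLinearMap.smul_apply, smul_eq_mul]
  have h6 : t * (sumOn E' x) ≤ t * (a:ℝ) := mul_le_mul_of_nonneg_left hFx ht0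
  linarith

lemma core_eq {M : Matroid (Fin n)} (E' : Set (Fin n)) (a : ℕ)
    (hex : ∃ B₀, M.IsBase B₀ ∧ (B₀ ∩ E').ncard = a)
    {x : Fin n → ℝ} (hx : x ∈ convexHull ℝ {y | ∃ B, M.IsBase B ∧ y = incVec B})
    (hFx : sumOn E' x = (a : ℝ)) :
    x ∈ convexHull ℝ {y | ∃ B, (M.IsBase B ∧ (B ∩ E').ncard = a) ∧ y = incVec B} := by
  have hfin : {y | ∃ B, (M.IsBase B ∧ (B ∩ E').ncard = a) ∧ y = incVec B}.Finite := by
    have hsub : {y | ∃ B, (M.IsBase B ∧ (B ∩ E').ncard = a) ∧ y = incVec B}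
        ⊆ incVec '' (Set.univ : Set (Set (Fin n))) := by
      rintro y ⟨B, _, rfl⟩; exact ⟨B, trivial, rfl⟩
    exact (Set.Finite.image _ (Set.toFinite _)).subset hsub
  apply mem_hull_of_forall_le hfin
  intro φ
  obtain ⟨t, D, hD, hDa, hall⟩ := key_lemma E' a hex φ
  refine ⟨incVec D, ⟨D, ⟨hD, hDa⟩, rfl⟩, ?_⟩
  set L : (Fin n → ℝ) →L[ℝ] ℝ := φ - t • (sumOn E') with hL
  have hLy : ∀ y ∈ {y | ∃ B, M.IsBase B ∧ y = incVec B}, L y ≤ φ (incVec D) - t * (a:ℝ) := by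
    rintro y ⟨B, hB, rfl⟩
    have h1 := hall B hB
    have h2 : L (incVec B) = φ (incVec B) - t * ((B ∩ E').ncard : ℝ) := by
      simp [hL, sumOn_incVec, ContinuousLinearMap.sub_apply, ContinuousLinearMap.smul_apply,
        smul_eq_mul]
    rw [h2]
    have h3 : t * ((a:ℝ) - ((B ∩ E').ncard:ℝ)) = t * (a:ℝ) - t * ((B ∩ E').ncard:ℝ) := by ring
    linarith
  have h4 : L x ≤ φ (incVec D) - t * (a:ℝ) := hull_le hLy hx
  have h5 : L x = φ x - t * sumOn E' x := by
    simp [hL, ContinuousLinearMap.sub_apply, ContinuousLinearMap.smul_apply, smul_eq_mul]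
  rw [hFx] at h5
  linarith

lemma base_inter_split {E₁ E₂ : Set (Fin n)} (hdisj : Disjoint E₁ E₂)
    (hun : E₁ ∪ E₂ = univ) (B : Set (Fin n)) :
    (B ∩ E₁).ncard + (B ∩ E₂).ncard = B.ncard := by
  have hd : Disjoint (B ∩ E₁) (B ∩ E₂) := hdisj.mono inter_subset_right inter_subset_right
  rw [← Set.ncard_union_eq hd (Set.toFinite _) (Set.toFinite _)]
  congr 1
  rw [← Set.inter_union_distrib_left, hun, Set.inter_univ]

lemma pres_exchange {M : Matroid (Fin n)} (hME : M.E = univ) {r a₁ a₂ : ℕ}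
    (hrank : mrk M = r) {E₁ E₂ : Set (Fin n)} (hdisj : Disjoint E₁ E₂)
    (hun : E₁ ∪ E₂ = univ) (hr : r = a₁ + a₂)
    (hP2 : ∀ X Y : Set (Fin n), M.Indep X → X ⊆ E₁ → X.ncard ≤ a₁ →
      M.Indep Y → Y ⊆ E₂ → Y.ncard ≤ a₂ → M.Indep (X ∪ Y))
    {B B' : Set (Fin n)} (hB : M.IsBase B) (hB1 : (B ∩ E₁).ncard = a₁)
    (hB' : M.IsBase B') (hB'1 : (B' ∩ E₁).ncard = a₁)
    {e : Fin n} (heB : e ∈ B) (heB' : e ∉ B') :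
    ∃ b, b ∈ B' ∧ b ∉ B ∧ M.IsBase (insert b (B \ {e})) ∧
      ((insert b (B \ {e})) ∩ E₁).ncard = a₁ := by
  have hBc : B.ncard = r := by rw [base_ncard_eq_mrk hB, hrank]
  have hB'c : B'.ncard = r := by rw [base_ncard_eq_mrk hB', hrank]
  have hB2 : (B ∩ E₂).ncard = a₂ := by
    have := base_inter_split hdisj hun B; omega
  have hB'2 : (B' ∩ E₂).ncard = a₂ := by
    have := base_inter_split hdisj hun B'; omega
  have heH : e ∉ M.closure (B \ {e}) := hB.indep.notMem_closure_diff_of_mem heB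
  have hkey : ∀ (X Y : Set (Fin n)), M.Indep X → X ⊆ E₁ → X.ncard = a₁ → M.Indep Y → Y ⊆ E₂ →
      Y.ncard = a₂ → X ∪ Y ⊆ M.closure (B \ {e}) → False := by
    intro X Y hX hXE hXc hY hYE hYc hsub
    have hXYdisj : Disjoint X Y := hdisj.mono hXE hYE
    have hXY : M.Indep (X ∪ Y) := hP2 X Y hX hXE hXc.le hY hYE hYc.le
    have hXYbase : M.IsBase (X ∪ Y) := base_of_indep_ncard hXY (by
      rw [Set.ncard_union_eq hXYdisj (Set.toFinite _) (Set.toFinite _), hXc, hYc, hrank, hr])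
    have h2 : M.closure (X ∪ Y) ⊆ M.closure (B \ {e}) :=
      M.closure_subset_closure_of_subset_closure hsub
    have h3 : e ∈ M.closure (X ∪ Y) := by
      rw [hXYbase.closure_eq, hME]; exact mem_univ e
    exact heH (h2 h3)
  have heE : e ∈ E₁ ∪ E₂ := hun ▸ mem_univ e
  have hBsubE : B \ {e} ⊆ M.E := diff_subset.trans hB.subset_ground
  rcases heE with he1 | he2
  · -- e ∈ E₁
    have hnot : ¬ (B' ∩ E₁ ⊆ M.closure (B \ {e})) := by
      intro hsub
      apply hkey (B' ∩ E₁) (B ∩ E₂) (hB'.indep.subset inter_subset_left) inter_subset_right hB'1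
        (hB.indep.subset inter_subset_left) inter_subset_right hB2
      apply union_subset hsub
      intro x hx
      have hxe : x ≠ e := fun h => (hdisj.ne_of_mem he1 hx.2) h.symm
      exact M.subset_closure _ hBsubE ⟨hx.1, hxe⟩
    obtain ⟨b, hbmem, hbH⟩ := not_subset.mp hnot
    have hbB : b ∉ B := by
      intro hbB
      have hbe : b ≠ e := fun h => heB' (h ▸ hbmem.1)
      exact hbH (M.subset_closure _ hBsubE ⟨hbB, hbe⟩)
    have hind : M.Indep (insert b (B \ {e})) :=
      (((hB.indep.subset diff_subset).notMem_closure_iff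
        (by rw [hME]; exact mem_univ b)).mp hbH).1
    refine ⟨b, hbmem.1, hbB, hB.exchange_isBase_of_indep hbB hind, ?_⟩
    have hset : (insert b (B \ {e})) ∩ E₁ = insert b ((B ∩ E₁) \ {e}) := by
      ext i
      simp only [Set.mem_inter_iff, Set.mem_insert_iff, Set.mem_diff, Set.mem_singleton_iff]
      constructor
      · rintro ⟨rfl | ⟨hiB, hie⟩, hiE⟩
        · exact Or.inl rfl
        · exact Or.inr ⟨⟨hiB, hiE⟩, hie⟩
      · rintro (rfl | ⟨⟨hiB, hiE⟩, hie⟩)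
        · exact ⟨Or.inl rfl, hbmem.2⟩
        · exact ⟨Or.inr ⟨hiB, hie⟩, hiE⟩
    rw [hset, Set.ncard_insert_of_notMem (fun h => hbB h.1.1) (Set.toFinite _)]
    have := Set.ncard_diff_singleton_add_one (show e ∈ B ∩ E₁ from ⟨heB, he1⟩) (Set.toFinite _)
    omega
  · -- e ∈ E₂
    have hnot : ¬ (B' ∩ E₂ ⊆ M.closure (B \ {e})) := by
      intro hsub
      apply hkey (B ∩ E₁) (B' ∩ E₂) (hB.indep.subset inter_subset_left) inter_subset_right hB1
        (hB'.indep.subset inter_subset_left) inter_subset_right hB'2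
      apply union_subset _ hsub
      intro x hx
      have hxe : x ≠ e := fun h => (hdisj.ne_of_mem hx.2 he2) h
      exact M.subset_closure _ hBsubE ⟨hx.1, hxe⟩
    obtain ⟨b, hbmem, hbH⟩ := not_subset.mp hnot
    have hbB : b ∉ B := by
      intro hbB
      have hbe : b ≠ e := fun h => heB' (h ▸ hbmem.1)
      exact hbH (M.subset_closure _ hBsubE ⟨hbB, hbe⟩)
    have hind : M.Indep (insert b (B \ {e})) :=
      (((hB.indep.subset diff_subset).notMem_closure_iff
        (by rw [hME]; exact mem_univ b)).mp hbH).1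
    refine ⟨b, hbmem.1, hbB, hB.exchange_isBase_of_indep hbB hind, ?_⟩
    have hbE1 : b ∉ E₁ := fun h => (hdisj.ne_of_mem h hbmem.2) rfl
    have heE1 : e ∉ E₁ := fun h => (hdisj.ne_of_mem h he2) rfl
    have hset : (insert b (B \ {e})) ∩ E₁ = B ∩ E₁ := by
      ext i
      simp only [Set.mem_inter_iff, Set.mem_insert_iff, Set.mem_diff, Set.mem_singleton_iff]
      constructor
      · rintro ⟨rfl | ⟨hiB, hie⟩, hiE⟩
        · exact absurd hiE hbE1
        · exact ⟨hiB, hiE⟩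
      · rintro ⟨hiB, hiE⟩
        exact ⟨Or.inr ⟨hiB, fun h => heE1 (h ▸ hiE)⟩, hiE⟩
    rw [hset, hB1]

lemma exists_middle_base {M : Matroid (Fin n)} {r a₁ a₂ : ℕ}
    (hrank : mrk M = r) {E₁ E₂ : Set (Fin n)} (hdisj : Disjoint E₁ E₂) (hr : r = a₁ + a₂)
    (hP2 : ∀ X Y : Set (Fin n), M.Indep X → X ⊆ E₁ → X.ncard ≤ a₁ →
      M.Indep Y → Y ⊆ E₂ → Y.ncard ≤ a₂ → M.Indep (X ∪ Y))
    (ha₁ : a₁ < mrk (M ↾ E₁)) (ha₂ : a₂ < mrk (M ↾ E₂)) :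
    ∃ B₀, M.IsBase B₀ ∧ (B₀ ∩ E₁).ncard = a₁ ∧ (B₀ ∩ E₂).ncard = a₂ := by
  obtain ⟨X', hX', hXE', hXc'⟩ := exists_indep_of_lt_mrk ha₁
  obtain ⟨X, hXsub, hXc⟩ := Set.exists_subset_card_eq (show a₁ ≤ X'.ncard by omega)
  obtain ⟨Y', hY', hYE', hYc'⟩ := exists_indep_of_lt_mrk ha₂
  obtain ⟨Y, hYsub, hYc⟩ := Set.exists_subset_card_eq (show a₂ ≤ Y'.ncard by omega)
  have hXE : X ⊆ E₁ := hXsub.trans hXE'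
  have hYE : Y ⊆ E₂ := hYsub.trans hYE'
  have hds : Disjoint X Y := hdisj.mono hXE hYE
  have hXY : M.Indep (X ∪ Y) :=
    hP2 X Y (hX'.subset hXsub) hXE hXc.le (hY'.subset hYsub) hYE hYc.le
  have hbase : M.IsBase (X ∪ Y) := base_of_indep_ncard hXY (by
    rw [Set.ncard_union_eq hds (Set.toFinite _) (Set.toFinite _), hXc, hYc, hrank, hr])
  have h1 : (X ∪ Y) ∩ E₁ = X := by
    ext i
    simp only [Set.mem_inter_iff, Set.mem_union]
    constructor
    · rintro ⟨hi | hi, hiE⟩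
      · exact hi
      · exact absurd rfl (hdisj.ne_of_mem hiE (hYE hi))
    · intro hi; exact ⟨Or.inl hi, hXE hi⟩
  have h2 : (X ∪ Y) ∩ E₂ = Y := by
    ext i
    simp only [Set.mem_inter_iff, Set.mem_union]
    constructor
    · rintro ⟨hi | hi, hiE⟩
      · exact absurd rfl (hdisj.ne_of_mem (hXE hi) hiE)
      · exact hi
    · intro hi; exact ⟨Or.inr hi, hYE hi⟩
  exact ⟨X ∪ Y, hbase, by rw [h1, hXc], by rw [h2, hYc]⟩

lemma exists_heavy_base {M : Matroid (Fin n)} {a : ℕ} {E' : Set (Fin n)}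
    (ha : a < mrk (M ↾ E')) :
    ∃ A, M.IsBase A ∧ a < (A ∩ E').ncard := by
  obtain ⟨X, hX, hXE, hXc⟩ := exists_indep_of_lt_mrk ha
  obtain ⟨A, hA, hXA⟩ := hX.exists_isBase_superset
  refine ⟨A, hA, ?_⟩
  have hsub : X ⊆ A ∩ E' := subset_inter hXA hXE
  have := Set.ncard_le_ncard hsub (Set.toFinite _)
  omega

end SplitAux

open SplitAux

/-- a good 2-partition of `M` yields a hyperplane split
`P(M) = P(M₁) ∪ P(M₂)`. -/
theorem statement1 {n : ℕ} (M : Matroid (Fin n)) (hME : M.E = Set.univ) (r : ℕ)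
    (hrank : mrk M = r) (E₁ E₂ : Set (Fin n)) (a₁ a₂ : ℕ)
    (hgood : IsGoodPartition2 M r E₁ E₂ a₁ a₂)
    (M₁ M₂ : Matroid (Fin n)) (hM₁E : M₁.E = M.E) (hM₂E : M₂.E = M.E)
    (hM₁ : ∀ B, M₁.IsBase B ↔ M.IsBase B ∧ (B ∩ E₁).ncard ≤ a₁)
    (hM₂ : ∀ B, M₂.IsBase B ↔ M.IsBase B ∧ (B ∩ E₂).ncard ≤ a₂) :
    basePolytope M = basePolytope M₁ ∪ basePolytope M₂ ∧
    basePolytope M₁ ⊂ basePolytope M ∧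
    basePolytope M₂ ⊂ basePolytope M ∧
    IsExtreme ℝ (basePolytope M₁) (basePolytope M₁ ∩ basePolytope M₂) ∧
    IsExtreme ℝ (basePolytope M₂) (basePolytope M₁ ∩ basePolytope M₂) ∧
    ∃ N : Matroid (Fin n), basePolytope M₁ ∩ basePolytope M₂ = basePolytope N := by
  classical
  obtain ⟨hun0, hdisj, -, -, ha₁pos, ha₁lt, ha₂pos, ha₂lt, hr, hP2r⟩ := hgood
  have hun : E₁ ∪ E₂ = univ := by rw [hun0, hME]
  have hP2 : ∀ X Y : Set (Fin n), M.Indep X → X ⊆ E₁ → X.ncard ≤ a₁ →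
      M.Indep Y → Y ⊆ E₂ → Y.ncard ≤ a₂ → M.Indep (X ∪ Y) := fun X Y hX hXE hXc hY hYE hYc =>
    hP2r X Y (Matroid.restrict_indep_iff.mpr ⟨hX, hXE⟩) hXc
      (Matroid.restrict_indep_iff.mpr ⟨hY, hYE⟩) hYc
  obtain ⟨B₀, hB₀, hB₀1, hB₀2⟩ := exists_middle_base hrank hdisj hr hP2 ha₁lt ha₂lt
  have hex1 : ∃ B, M.IsBase B ∧ (B ∩ E₁).ncard = a₁ := ⟨B₀, hB₀, hB₀1⟩
  have hex2 : ∃ B, M.IsBase B ∧ (B ∩ E₂).ncard = a₂ := ⟨B₀, hB₀, hB₀2⟩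
  have hrc : (r : ℝ) = (a₁ : ℝ) + (a₂ : ℝ) := by exact_mod_cast hr
  -- vertex sets
  have hP1eq : basePolytope M₁ =
      convexHull ℝ {y | ∃ B, (M.IsBase B ∧ (B ∩ E₁).ncard ≤ a₁) ∧ y = incVec B} := by
    unfold basePolytope
    congr 1
    ext y
    constructor
    · rintro ⟨B, hB, rfl⟩; exact ⟨B, (hM₁ B).mp hB, rfl⟩
    · rintro ⟨B, hB, rfl⟩; exact ⟨B, (hM₁ B).mpr hB, rfl⟩
  have hP2eq : basePolytope M₂ =
      convexHull ℝ {y | ∃ B, (M.IsBase B ∧ (B ∩ E₂).ncard ≤ a₂) ∧ y = incVec B} := by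
    unfold basePolytope
    congr 1
    ext y
    constructor
    · rintro ⟨B, hB, rfl⟩; exact ⟨B, (hM₂ B).mp hB, rfl⟩
    · rintro ⟨B, hB, rfl⟩; exact ⟨B, (hM₂ B).mpr hB, rfl⟩
  have hPMeq : basePolytope M = convexHull ℝ {y | ∃ B, M.IsBase B ∧ y = incVec B} := rfl
  -- inclusions of polytopes
  have hsub1 : basePolytope M₁ ⊆ basePolytope M := by
    rw [hP1eq, hPMeq]
    exact convexHull_mono (by rintro y ⟨B, hB, rfl⟩; exact ⟨B, hB.1, rfl⟩)
  have hsub2 : basePolytope M₂ ⊆ basePolytope M := by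
    rw [hP2eq, hPMeq]
    exact convexHull_mono (by rintro y ⟨B, hB, rfl⟩; exact ⟨B, hB.1, rfl⟩)
  -- linear bounds on the polytopes
  have hF1le : ∀ x ∈ basePolytope M₁, sumOn E₁ x ≤ (a₁ : ℝ) := by
    intro x hx
    rw [hP1eq] at hx
    refine hull_le ?_ hx
    rintro y ⟨B, hB, rfl⟩
    rw [sumOn_incVec]
    exact_mod_cast hB.2
  have hF2le : ∀ x ∈ basePolytope M₂, sumOn E₂ x ≤ (a₂ : ℝ) := by
    intro x hx
    rw [hP2eq] at hx
    refine hull_le ?_ hx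
    rintro y ⟨B, hB, rfl⟩
    rw [sumOn_incVec]
    exact_mod_cast hB.2
  have hsum_x : ∀ x ∈ basePolytope M, sumOn E₁ x + sumOn E₂ x = (r : ℝ) := by
    intro x hx
    rw [sumOn_split hdisj hun]
    refine hull_eqc ?_ hx
    rintro y ⟨B, hB, rfl⟩
    rw [sumOn_incVec, Set.inter_univ]
    have := base_ncard_eq_mrk hB
    rw [hrank] at this
    exact_mod_cast this
  -- membership in the halves
  have hcore1 : ∀ x ∈ basePolytope M, sumOn E₁ x ≤ (a₁ : ℝ) → x ∈ basePolytope M₁ := by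
    intro x hx hFx
    rw [hP1eq]
    exact core_le E₁ a₁ hex1 hx hFx
  have hcore2 : ∀ x ∈ basePolytope M, sumOn E₂ x ≤ (a₂ : ℝ) → x ∈ basePolytope M₂ := by
    intro x hx hFx
    rw [hP2eq]
    exact core_le E₂ a₂ hex2 hx hFx
  -- the middle face as a hull
  have hmidsub1 : convexHull ℝ {y | ∃ B, (M.IsBase B ∧ (B ∩ E₁).ncard = a₁) ∧ y = incVec B}
      ⊆ basePolytope M₁ ∩ basePolytope M₂ := by
    intro x hx
    constructor
    · rw [hP1eq]
      refine convexHull_mono ?_ hx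
      rintro y ⟨B, hB, rfl⟩
      exact ⟨B, ⟨hB.1, hB.2.le⟩, rfl⟩
    · rw [hP2eq]
      refine convexHull_mono ?_ hx
      rintro y ⟨B, hB, rfl⟩
      refine ⟨B, ⟨hB.1, ?_⟩, rfl⟩
      have hs := base_inter_split hdisj hun B
      have hc := base_ncard_eq_mrk hB.1
      rw [hrank] at hc
      omega
  have hmid_eq : ∀ x ∈ basePolytope M₁ ∩ basePolytope M₂, sumOn E₁ x = (a₁ : ℝ) := by
    rintro x ⟨hx1, hx2⟩
    have h1 := hF1le x hx1
    have h2 := hF2le x hx2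
    have h3 := hsum_x x (hsub1 hx1)
    linarith [hrc]
  have hIntChar : ∀ x ∈ basePolytope M, sumOn E₁ x = (a₁ : ℝ) →
      x ∈ basePolytope M₁ ∩ basePolytope M₂ :=
    fun x hx hFx => hmidsub1 (core_eq E₁ a₁ hex1 hx hFx)
  have hB₀P1 : incVec B₀ ∈ basePolytope M₁ := by
    rw [hP1eq]
    exact subset_convexHull ℝ _ ⟨B₀, ⟨hB₀, hB₀1.le⟩, rfl⟩
  have hB₀P2 : incVec B₀ ∈ basePolytope M₂ := by
    rw [hP2eq]
    exact subset_convexHull ℝ _ ⟨B₀, ⟨hB₀, hB₀2.le⟩, rfl⟩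
  refine ⟨?_, ?_, ?_, ?_, ?_, ?_⟩
  · -- union
    apply Set.Subset.antisymm
    · intro x hx
      rcases le_total (sumOn E₁ x) (a₁ : ℝ) with h | h
      · exact Or.inl (hcore1 x hx h)
      · refine Or.inr (hcore2 x hx ?_)
        have h3 := hsum_x x hx
        linarith [hrc]
    · exact union_subset hsub1 hsub2
  · -- M₁ proper
    rw [Set.ssubset_iff_of_subset hsub1]
    obtain ⟨A, hA, hAgt⟩ := exists_heavy_base (M := M) (a := a₁) (E' := E₁) ha₁lt
    refine ⟨incVec A, subset_convexHull ℝ _ ⟨A, hA, rfl⟩, fun hmem => ?_⟩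
    have := hF1le _ hmem
    rw [sumOn_incVec] at this
    have : (A ∩ E₁).ncard ≤ a₁ := by exact_mod_cast this
    omega
  · -- M₂ proper
    rw [Set.ssubset_iff_of_subset hsub2]
    obtain ⟨A, hA, hAgt⟩ := exists_heavy_base (M := M) (a := a₂) (E' := E₂) ha₂lt
    refine ⟨incVec A, subset_convexHull ℝ _ ⟨A, hA, rfl⟩, fun hmem => ?_⟩
    have := hF2le _ hmem
    rw [sumOn_incVec] at this
    have : (A ∩ E₂).ncard ≤ a₂ := by exact_mod_cast this
    omega
  · -- extreme in M₁
    have hexp : IsExposed ℝ (basePolytope M₁) (basePolytope M₁ ∩ basePolytope M₂) := by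
      intro _
      refine ⟨sumOn E₁, ?_⟩
      ext x
      constructor
      · intro hx
        refine ⟨hx.1, fun y hy => ?_⟩
        rw [hmid_eq x hx]
        exact hF1le y hy
      · rintro ⟨hx1, hmax⟩
        have h1 : (a₁ : ℝ) ≤ sumOn E₁ x := by
          have := hmax (incVec B₀) hB₀P1
          rwa [sumOn_incVec, hB₀1] at this
        exact hIntChar x (hsub1 hx1) (le_antisymm (hF1le x hx1) h1)
    exact hexp.isExtreme
  · -- extreme in M₂
    have hmidsub2 : convexHull ℝ {y | ∃ B, (M.IsBase B ∧ (B ∩ E₂).ncard = a₂) ∧ y = incVec B}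
        ⊆ basePolytope M₁ ∩ basePolytope M₂ := by
      intro x hx
      constructor
      · rw [hP1eq]
        refine convexHull_mono ?_ hx
        rintro y ⟨B, hB, rfl⟩
        refine ⟨B, ⟨hB.1, ?_⟩, rfl⟩
        have hs := base_inter_split hdisj hun B
        have hc := base_ncard_eq_mrk hB.1
        rw [hrank] at hc
        omega
      · rw [hP2eq]
        refine convexHull_mono ?_ hx
        rintro y ⟨B, hB, rfl⟩
        exact ⟨B, ⟨hB.1, hB.2.le⟩, rfl⟩
    have hmid_eq2 : ∀ x ∈ basePolytope M₁ ∩ basePolytope M₂, sumOn E₂ x = (a₂ : ℝ) := by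
      rintro x ⟨hx1, hx2⟩
      have h1 := hF1le x hx1
      have h2 := hF2le x hx2
      have h3 := hsum_x x (hsub1 hx1)
      linarith [hrc]
    have hexp : IsExposed ℝ (basePolytope M₂) (basePolytope M₁ ∩ basePolytope M₂) := by
      intro _
      refine ⟨sumOn E₂, ?_⟩
      ext x
      constructor
      · intro hx
        refine ⟨hx.2, fun y hy => ?_⟩
        rw [hmid_eq2 x hx]
        exact hF2le y hy
      · rintro ⟨hx2, hmax⟩
        have h1 : (a₂ : ℝ) ≤ sumOn E₂ x := by
          have := hmax (incVec B₀) hB₀P2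
          rwa [sumOn_incVec, hB₀2] at this
        exact hmidsub2 (core_eq E₂ a₂ hex2 (hsub2 hx2) (le_antisymm (hF2le x hx2) h1))
    exact hexp.isExtreme
  · -- the middle matroid
    refine ⟨Matroid.ofIsBaseOfFinite (Set.finite_univ) (fun B => M.IsBase B ∧ (B ∩ E₁).ncard = a₁)
      ⟨B₀, hB₀, hB₀1⟩ ?_ (fun B _ => Set.subset_univ B), ?_⟩
    · rintro X Y ⟨hX, hX1⟩ ⟨hY, hY1⟩ e ⟨heX, heY⟩
      obtain ⟨b, hbY, hbX, hbase, hcount⟩ :=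
        pres_exchange hME hrank hdisj hun hr hP2 hX hX1 hY hY1 heX heY
      exact ⟨b, ⟨hbY, hbX⟩, hbase, hcount⟩
    · apply Set.Subset.antisymm
      · intro x hx
        have hFx := hmid_eq x hx
        have hmem := core_eq E₁ a₁ hex1 (hsub1 hx.1) hFx
        unfold basePolytope
        refine convexHull_mono ?_ hmem
        rintro y ⟨B, hB, rfl⟩
        exact ⟨B, hB, rfl⟩
      · intro x hx
        apply hmidsub1
        unfold basePolytope at hx
        refine convexHull_mono ?_ hx
        rintro y ⟨B, hB, rfl⟩
        exact ⟨B, hB, rfl⟩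
end

section
/- Let t ≥ 2, let M be a matroid of rank r on E, and let E = E_1 ∪ ⋯ ∪ E_t be a good t-partition of M with associated integers a_1,…,a_t. Define B(M_1) = {B a base of M : |B ∩ E_1| ≤ a_1}, and for each 2 ≤ j ≤ t define B(M_j) = {B a base of M : |B ∩ (E_1 ∪ ⋯ ∪ E_h)| ≥ a_1 + ⋯ + a_h for every 1 ≤ h ≤ j−1, and |B ∩ (E_1 ∪ ⋯ ∪ E_j)| ≤ a_1 + ⋯ + a_j}. Then for each 1 ≤ j ≤ t, B(M_j) is the collection of bases of a matroid on E. -/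
open Matroid Set

/-- The union of the blocks `E_i` with `lo ≤ i < hi` (`i` is a 0-based index, so the paper's
`E_1 ∪ ⋯ ∪ E_j` is `blockU E 0 j`). -/
def blockU {α : Type*} {t : ℕ} (E : Fin t → Set α) (lo hi : ℕ) : Set α :=
  ⋃ i ∈ {i : Fin t | lo ≤ (i : ℕ) ∧ (i : ℕ) < hi}, E i

/-- The sum of the integers `a_i` with `lo ≤ i < hi` (0-based), so the paper's
`a_1 + ⋯ + a_j` is `blockSum a 0 j`. -/
def blockSum {t : ℕ} (a : Fin t → ℕ) (lo hi : ℕ) : ℕ :=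
  ∑ i ∈ Finset.univ.filter (fun i : Fin t => lo ≤ (i : ℕ) ∧ (i : ℕ) < hi), a i

/-- A good `t`-partition of a rank-`r` matroid `M`: the ground set is partitioned into blocks
`E_1, …, E_t` (here indexed by `Fin t`) with `r(M|E_i) > 1`, together with integers
`0 < a_i < r(M|E_i)` such that `(P1)` `r = a_1 + ⋯ + a_t` and conditions `(P2a)`,`(P2b)` hold. -/
def IsGoodPartition {α : Type*} {t : ℕ} (M : Matroid α) (r : ℕ)
    (E : Fin t → Set α) (a : Fin t → ℕ) : Prop :=
  (⋃ i, E i) = M.E ∧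
  Pairwise (Function.onFun Disjoint E) ∧
  (∀ i, 1 < mrk (M ↾ E i)) ∧
  (∀ i, 0 < a i ∧ a i < mrk (M ↾ E i)) ∧
  r = (∑ i, a i) ∧
  (∀ j : ℕ, 1 ≤ j → j ≤ t - 1 → ∀ X Y : Set α,
    (M ↾ blockU E 0 j).Indep X → X.ncard ≤ blockSum a 0 j →
    (M ↾ blockU E j t).Indep Y → Y.ncard ≤ blockSum a j t →
    M.Indep (X ∪ Y)) ∧
  (∀ j k : ℕ, 1 ≤ j → j < k → k ≤ t - 1 → ∀ X Y Z : Set α,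
    (M ↾ blockU E 0 j).Indep X → X.ncard ≤ blockSum a 0 j →
    (M ↾ blockU E j k).Indep Y → Y.ncard ≤ blockSum a j k →
    (M ↾ blockU E k t).Indep Z → Z.ncard ≤ blockSum a k t →
    M.Indep (X ∪ Y ∪ Z))

/-- The family `ℬ(M_j)` from the paper : bases `B` of `M` with
`|B ∩ (E_1 ∪ ⋯ ∪ E_h)| ≥ a_1 + ⋯ + a_h` for every `1 ≤ h ≤ j - 1`, and
`|B ∩ (E_1 ∪ ⋯ ∪ E_j)| ≤ a_1 + ⋯ + a_j`. -/
def BFam {α : Type*} {t : ℕ} (M : Matroid α) (E : Fin t → Set α) (a : Fin t → ℕ)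
    (j : ℕ) : Set (Set α) :=
  {B | M.IsBase B ∧
    (∀ h : ℕ, 1 ≤ h → h ≤ j - 1 → blockSum a 0 h ≤ (B ∩ blockU E 0 h).ncard) ∧
    (B ∩ blockU E 0 j).ncard ≤ blockSum a 0 j}

namespace Stmt2

variable {α : Type*} {t : ℕ}

lemma mem_blockU {E : Fin t → Set α} {lo hi : ℕ} {x : α} :
    x ∈ blockU E lo hi ↔ ∃ i : Fin t, (lo ≤ (i:ℕ) ∧ (i:ℕ) < hi) ∧ x ∈ E i := by
  simp [blockU]

lemma blockU_mono (E : Fin t → Set α) {h h' : ℕ} (hh : h ≤ h') :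
    blockU E 0 h ⊆ blockU E 0 h' := by
  intro x hx
  rw [mem_blockU] at hx ⊢
  obtain ⟨i, ⟨h1, h2⟩, h3⟩ := hx
  exact ⟨i, ⟨h1, h2.trans_le hh⟩, h3⟩

lemma subset_blockU {E : Fin t → Set α} {lo hi : ℕ} {i : Fin t} (h1 : lo ≤ (i:ℕ))
    (h2 : (i:ℕ) < hi) : E i ⊆ blockU E lo hi :=
  fun x hx => mem_blockU.2 ⟨i, ⟨h1, h2⟩, hx⟩

lemma blockU_eq_empty {E : Fin t → Set α} {lo hi : ℕ} (h : hi ≤ lo) :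
    blockU E lo hi = ∅ := by
  ext x
  rw [mem_blockU]
  simp only [Set.mem_empty_iff_false, iff_false]
  rintro ⟨i, ⟨h1, h2⟩, -⟩
  omega

lemma blockU_union (E : Fin t → Set α) (j : ℕ) :
    blockU E 0 j ∪ blockU E j t = ⋃ i, E i := by
  ext x
  simp only [Set.mem_union, mem_blockU, Set.mem_iUnion]
  constructor
  · rintro (⟨i, _, h⟩ | ⟨i, _, h⟩) <;> exact ⟨i, h⟩
  · rintro ⟨i, h⟩
    rcases lt_or_ge (i : ℕ) j with hc | hc
    · exact Or.inl ⟨i, ⟨Nat.zero_le _, hc⟩, h⟩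
    · exact Or.inr ⟨i, ⟨hc, i.isLt⟩, h⟩

lemma blockU_disjoint {E : Fin t → Set α} (hd : Pairwise (Function.onFun Disjoint E))
    (j : ℕ) : Disjoint (blockU E 0 j) (blockU E j t) := by
  rw [Set.disjoint_left]
  intro x hx hx'
  rw [mem_blockU] at hx hx'
  obtain ⟨i, ⟨-, hi⟩, hxi⟩ := hx
  obtain ⟨i', ⟨hi', -⟩, hxi'⟩ := hx'
  have hne : i ≠ i' := by
    intro h; subst h; omega
  exact Set.disjoint_left.1 (hd hne) hxi hxi'

lemma blockSum_split (a : Fin t → ℕ) (j : ℕ) :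
    blockSum a 0 j + blockSum a j t = ∑ i, a i := by
  unfold blockSum
  rw [← Finset.sum_filter_add_sum_filter_not Finset.univ (fun i : Fin t => (i:ℕ) < j)]
  congr 1
  · apply Finset.sum_congr _ (fun _ _ => rfl)
    apply Finset.filter_congr
    intro i _
    simp
  · apply Finset.sum_congr _ (fun _ _ => rfl)
    apply Finset.filter_congr
    intro i _
    simp [Nat.not_lt, i.isLt]

lemma blockSum_succ (a : Fin t → ℕ) {k : ℕ} (hk : k < t) :
    blockSum a 0 (k+1) = blockSum a 0 k + a ⟨k, hk⟩ := by
  unfold blockSum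
  rw [add_comm (∑ _ ∈ _, _)]
  rw [← Finset.sum_insert (a := (⟨k, hk⟩ : Fin t)) (by simp)]
  apply Finset.sum_congr _ (fun _ _ => rfl)
  ext i
  simp only [Finset.mem_filter, Finset.mem_univ, true_and, Finset.mem_insert]
  constructor
  · rintro ⟨-, h⟩
    rcases Nat.lt_or_ge (i:ℕ) k with h' | h'
    · exact Or.inr (by simp [h'])
    · left
      apply Fin.ext
      simp only []
      omega
  · rintro (rfl | h)
    · simp
    · simp at h
      omega

lemma blockSum_le_single (a : Fin t → ℕ) {j : ℕ} (hj : j < t) :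
    a ⟨j, hj⟩ ≤ blockSum a j t := by
  unfold blockSum
  apply Finset.single_le_sum (f := a) (fun _ _ => Nat.zero_le _)
  simp

lemma blockSum_zero (a : Fin t → ℕ) : blockSum a 0 0 = 0 := by
  unfold blockSum
  apply Finset.sum_eq_zero
  intro i hi
  simp at hi

lemma blockSum_top (a : Fin t → ℕ) : blockSum a 0 t = ∑ i, a i := by
  have h := blockSum_split a t
  have h2 : blockSum a t t = 0 := by
    unfold blockSum
    apply Finset.sum_eq_zero
    intro i hi
    simp only [Finset.mem_filter] at hi
    exact absurd hi.2.2 (by omega)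
  omega

section Rank

variable {M : Matroid α} {I B : Set α}

lemma indep_ncard_le_mrk (hfin : M.E.Finite) (hI : M.Indep I) : I.ncard ≤ mrk M :=
  le_csSup ⟨M.E.ncard, fun _ ⟨J, hJ, hc⟩ =>
    hc ▸ Set.ncard_le_ncard hJ.subset_ground hfin⟩ ⟨I, hI, rfl⟩

lemma exists_indep_ncard_eq_mrk (hfin : M.E.Finite) : ∃ I, M.Indep I ∧ I.ncard = mrk M := by
  have h : mrk M ∈ {n : ℕ | ∃ I, M.Indep I ∧ I.ncard = n} := by
    apply Nat.sSup_mem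
    · exact ⟨0, ⟨∅, M.empty_indep, by simp⟩⟩
    · exact ⟨M.E.ncard, fun _ ⟨J, hJ, hc⟩ => hc ▸ Set.ncard_le_ncard hJ.subset_ground hfin⟩
  exact h

lemma base_ncard (hfin : M.E.Finite) (hB : M.IsBase B) : B.ncard = mrk M := by
  refine le_antisymm (indep_ncard_le_mrk hfin hB.indep) ?_
  obtain ⟨I, hI, hc⟩ := exists_indep_ncard_eq_mrk (M := M) hfin
  obtain ⟨B', hB', hIB'⟩ := hI.exists_isBase_superset
  calc mrk M = I.ncard := hc.symm
    _ ≤ B'.ncard := Set.ncard_le_ncard hIB' (hfin.subset hB'.subset_ground)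
    _ = B.ncard := hB'.ncard_eq_ncard_of_isBase hB

lemma base_of_indep_ncard (hfin : M.E.Finite) (hI : M.Indep I) (h : mrk M ≤ I.ncard) :
    M.IsBase I := by
  obtain ⟨B', hB', hIB'⟩ := hI.exists_isBase_superset
  have : I = B' := Set.eq_of_subset_of_ncard_le hIB'
    ((base_ncard hfin hB').le.trans h) (hfin.subset hB'.subset_ground)
  exact this ▸ hB'

lemma exists_indep_ncard (hfin : M.E.Finite) {n : ℕ} (hn : n ≤ mrk M) :
    ∃ I, M.Indep I ∧ I.ncard = n := by
  obtain ⟨I, hI, hc⟩ := exists_indep_ncard_eq_mrk (M := M) hfin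
  obtain ⟨J, hJI, hJc⟩ := Set.exists_subset_card_eq (hc.symm ▸ hn)
  exact ⟨J, hI.subset hJI, hJc⟩

end Rank

section Counts

variable {B : Set α} {e f : α} {U : Set α}

lemma ceA (hf : f ∈ U) :
    (insert f (B \ {e})) ∩ U = insert f ((B ∩ U) \ {e}) := by
  ext x; by_cases hx : x = f <;> simp [hx, hf] <;> tauto

lemma ceB (hf : f ∉ U) :
    (insert f (B \ {e})) ∩ U = (B ∩ U) \ {e} := by
  ext x; constructor
  · rintro ⟨(rfl | ⟨hxB, hxe⟩), hxU⟩
    · exact absurd hxU hf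
    · exact ⟨⟨hxB, hxU⟩, hxe⟩
  · rintro ⟨⟨hxB, hxU⟩, hxe⟩
    exact ⟨Or.inr ⟨hxB, hxe⟩, hxU⟩

lemma ce1 (hB : B.Finite) (heB : e ∈ B) (hfB : f ∉ B) (he : e ∈ U) (hf : f ∈ U) :
    ((insert f (B \ {e})) ∩ U).ncard = (B ∩ U).ncard := by
  rw [ceA hf,
    Set.ncard_insert_of_notMem (by simp; tauto) ((hB.inter_of_left U).diff),
    Set.ncard_diff_singleton_add_one (Set.mem_inter heB he) (hB.inter_of_left U)]

lemma ce2 (hB : B.Finite) (heB : e ∈ B) (hfB : f ∉ B) (he : e ∈ U) (hf : f ∉ U) :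
    ((insert f (B \ {e})) ∩ U).ncard = (B ∩ U).ncard - 1 := by
  rw [ceB hf,
    Set.ncard_diff_singleton_of_mem (Set.mem_inter heB he)]

lemma ce3 (hB : B.Finite) (heB : e ∈ B) (hfB : f ∉ B) (he : e ∉ U) (hf : f ∈ U) :
    ((insert f (B \ {e})) ∩ U).ncard = (B ∩ U).ncard + 1 := by
  have h1 : (B ∩ U) \ {e} = B ∩ U := by
    apply Set.diff_singleton_eq_self; simp; tauto
  rw [ceA hf, h1,
    Set.ncard_insert_of_notMem (by simp; tauto) (hB.inter_of_left U)]

lemma ce4 (hB : B.Finite) (heB : e ∈ B) (hfB : f ∉ B) (he : e ∉ U) (hf : f ∉ U) :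
    ((insert f (B \ {e})) ∩ U).ncard = (B ∩ U).ncard := by
  have h1 : (B ∩ U) \ {e} = B ∩ U := by
    apply Set.diff_singleton_eq_self; simp; tauto
  rw [ceB hf, h1]

lemma ncard_exch (hBfin : B.Finite) (heB : e ∈ B) (hfB : f ∉ B) :
    (insert f (B \ {e})).ncard = B.ncard := by
  have h1 : f ∉ B \ {e} := fun h => hfB h.1
  rw [Set.ncard_insert_of_notMem h1 (hBfin.diff),
      Set.ncard_diff_singleton_of_mem heB]
  have : 0 < B.ncard := (Set.ncard_pos hBfin).mpr ⟨e, heB⟩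
  omega

end Counts

variable {M : Matroid α} {E : Fin t → Set α} {a : Fin t → ℕ} {r : ℕ}

lemma diff_blockU (hE : (⋃ i, E i) = M.E) (hd : Pairwise (Function.onFun Disjoint E))
    {S : Set α} (hS : S ⊆ M.E) (j : ℕ) : S \ blockU E 0 j = S ∩ blockU E j t := by
  have hu : blockU E 0 j ∪ blockU E j t = M.E := by rw [blockU_union, hE]
  have hdj := blockU_disjoint hd j
  ext x
  constructor
  · rintro ⟨hxS, hx⟩
    have hmem : x ∈ blockU E 0 j ∨ x ∈ blockU E j t := by
      rw [← Set.mem_union, hu]; exact hS hxS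
    exact ⟨hxS, hmem.resolve_left hx⟩
  · rintro ⟨hxS, hx⟩
    exact ⟨hxS, fun h => Set.disjoint_left.1 hdj h hx⟩

lemma exists_good_base (hfin : M.E.Finite) (hrank : mrk M = r)
    (hE : (⋃ i, E i) = M.E) (hd : Pairwise (Function.onFun Disjoint E))
    (ha : ∀ i, 0 < a i ∧ a i < mrk (M ↾ E i))
    (hr : r = ∑ i, a i)
    (P2a : ∀ j : ℕ, 1 ≤ j → j ≤ t - 1 → ∀ X Y : Set α,
      (M ↾ blockU E 0 j).Indep X → X.ncard ≤ blockSum a 0 j →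
      (M ↾ blockU E j t).Indep Y → Y.ncard ≤ blockSum a j t →
      M.Indep (X ∪ Y)) :
    ∃ B, M.IsBase B ∧ ∀ h, h ≤ t → (B ∩ blockU E 0 h).ncard = blockSum a 0 h := by
  have key : ∀ k, k ≤ t → ∃ X, M.Indep X ∧ X ⊆ blockU E 0 k ∧
      ∀ h, h ≤ k → (X ∩ blockU E 0 h).ncard = blockSum a 0 h := by
    intro k
    induction k with
    | zero =>
      intro _
      refine ⟨∅, M.empty_indep, Set.empty_subset _, ?_⟩
      intro h hh
      interval_cases h
      simp [blockSum_zero]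
    | succ k ih =>
      intro hk1
      have hkt : k < t := hk1
      obtain ⟨X, hXi, hXs, hXc⟩ := ih (Nat.le_of_succ_le hk1)
      set i0 : Fin t := ⟨k, hkt⟩ with hi0
      have hEi0 : E i0 ⊆ M.E := (Set.subset_iUnion E i0).trans hE.subset
      have hfin' : (M ↾ E i0).E.Finite := by
        rw [Matroid.restrict_ground_eq]; exact hfin.subset hEi0
      obtain ⟨I, hIi, hIc⟩ := exists_indep_ncard (M := M ↾ E i0) hfin' (le_of_lt (ha i0).2)
      rw [Matroid.restrict_indep_iff] at hIi
      have hXcard : X.ncard = blockSum a 0 k := by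
        have h := hXc k le_rfl
        rwa [Set.inter_eq_self_of_subset_left hXs] at h
      have hIU : I ⊆ blockU E k t := hIi.2.trans (subset_blockU le_rfl hkt)
      have hIU' : I ⊆ blockU E 0 (k+1) := hIi.2.trans (subset_blockU (Nat.zero_le _) (Nat.lt_succ_self k))
      have hXI : M.Indep (X ∪ I) := by
        rcases Nat.eq_zero_or_pos k with rfl | hk0
        · have hX0 : X = ∅ := Set.subset_eq_empty (hXs.trans (blockU_eq_empty le_rfl).subset) rfl
          rw [hX0, Set.empty_union]
          exact hIi.1
        · exact P2a k hk0 (by omega) X I (Matroid.restrict_indep_iff.mpr ⟨hXi, hXs⟩)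
            hXcard.le (Matroid.restrict_indep_iff.mpr ⟨hIi.1, hIU⟩)
            (hIc ▸ blockSum_le_single a hkt)
      have hdisjI : Disjoint (blockU E 0 k) I := (blockU_disjoint hd k).mono_right hIU
      refine ⟨X ∪ I, hXI, Set.union_subset (hXs.trans (blockU_mono E (Nat.le_succ k))) hIU', ?_⟩
      intro h hh
      rcases eq_or_lt_of_le hh with rfl | hlt
      · have hsub : X ∪ I ⊆ blockU E 0 (k+1) :=
          Set.union_subset (hXs.trans (blockU_mono E (Nat.le_succ k))) hIU'
        rw [Set.inter_eq_self_of_subset_left hsub,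
          Set.ncard_union_eq (hdisjI.mono_left hXs) (hfin.subset hXi.subset_ground)
            (hfin.subset hIi.1.subset_ground),
          hXcard, hIc, blockSum_succ a hkt]
      · have hh' : h ≤ k := Nat.lt_succ_iff.mp hlt
        have hIempty : I ∩ blockU E 0 h = ∅ :=
          Set.disjoint_iff_inter_eq_empty.mp
            (((blockU_disjoint hd k).mono_right hIU).symm.mono_right (blockU_mono E hh'))
        rw [Set.union_inter_distrib_right, hIempty, Set.union_empty]
        exact hXc h hh'
  obtain ⟨X, hXi, hXs, hXc⟩ := key t le_rfl
  have hXcard : X.ncard = r := by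
    have h := hXc t le_rfl
    rw [Set.inter_eq_self_of_subset_left hXs, blockSum_top] at h
    omega
  exact ⟨X, base_of_indep_ncard hfin hXi (by omega), hXc⟩

lemma exchange_step (hfin : M.E.Finite) (hrank : mrk M = r)
    (hE : (⋃ i, E i) = M.E) (hd : Pairwise (Function.onFun Disjoint E))
    (ha : ∀ i, 0 < a i ∧ a i < mrk (M ↾ E i))
    (hr : r = ∑ i, a i)
    (P2a : ∀ j : ℕ, 1 ≤ j → j ≤ t - 1 → ∀ X Y : Set α,
      (M ↾ blockU E 0 j).Indep X → X.ncard ≤ blockSum a 0 j →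
      (M ↾ blockU E j t).Indep Y → Y.ncard ≤ blockSum a j t →
      M.Indep (X ∪ Y))
    {j : ℕ} (hj1 : 1 ≤ j) (hjt : j ≤ t)
    {B B' : Set α} (hB : B ∈ BFam M E a j) (hB' : B' ∈ BFam M E a j)
    {e : α} (heB : e ∈ B) (heB' : e ∉ B') :
    ∃ f, (f ∈ B' ∧ f ∉ B) ∧ insert f (B \ {e}) ∈ BFam M E a j := by
  classical
  obtain ⟨hBb, hBlow, hBup⟩ := hB
  obtain ⟨hB'b, hB'low, hB'up⟩ := hB'
  have hBE : B ⊆ M.E := hBb.subset_ground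
  have hB'E : B' ⊆ M.E := hB'b.subset_ground
  have hBfin : B.Finite := hfin.subset hBE
  have hB'fin : B'.Finite := hfin.subset hB'E
  have hBcard : B.ncard = r := hrank ▸ base_ncard hfin hBb
  have hB'card : B'.ncard = r := hrank ▸ base_ncard hfin hB'b
  have hsplit : ∀ m : ℕ, blockSum a 0 m + blockSum a m t = r := by
    intro m; rw [blockSum_split]; omega
  set P : ℕ → Prop := fun h =>
    1 ≤ h ∧ h ≤ j - 1 ∧ e ∈ blockU E 0 h ∧ (B ∩ blockU E 0 h).ncard = blockSum a 0 h
    with hP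
  by_cases hA : ∃ h, P h
  -- Case A : some prefix constraint below j is tight and contains e
  · obtain ⟨m, hPm, hmin⟩ : ∃ m, P m ∧ ∀ h, h < m → ¬ P h :=
      ⟨Nat.find hA, Nat.find_spec hA, fun h hh => Nat.find_min hA hh⟩
    obtain ⟨hm1, hmj, hem, hmtight⟩ := hPm
    have hmt : m ≤ t - 1 := by omega
    have hemB : e ∈ B ∩ blockU E 0 m := ⟨heB, hem⟩
    have hcm1 : 1 ≤ (B ∩ blockU E 0 m).ncard :=
      (Set.ncard_pos (hBfin.inter_of_left _)).mpr ⟨e, hemB⟩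
    set X := (B ∩ blockU E 0 m) \ {e} with hXdef
    have hXcard : X.ncard = blockSum a 0 m - 1 := by
      rw [hXdef, Set.ncard_diff_singleton_of_mem hemB, hmtight]
    have hXindep : M.Indep X := hBb.indep.subset (fun x hx => hx.1.1)
    have hB'm : blockSum a 0 m ≤ (B' ∩ blockU E 0 m).ncard := hB'low m hm1 hmj
    have hlt : X.encard < (B' ∩ blockU E 0 m).encard := by
      rw [← ((hBfin.inter_of_left _).diff).cast_ncard_eq,
        ← (hB'fin.inter_of_left _).cast_ncard_eq]
      exact_mod_cast (by omega : X.ncard < (B' ∩ blockU E 0 m).ncard)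
    obtain ⟨f, hfmem, hfI⟩ := hXindep.augment (hB'b.indep.inter_right _) hlt
    have hfB' : f ∈ B' := hfmem.1.1
    have hfU : f ∈ blockU E 0 m := hfmem.1.2
    have hfe : f ≠ e := fun h => heB' (h ▸ hfB')
    have hfB : f ∉ B := fun h => hfmem.2 ⟨⟨h, hfU⟩, hfe⟩
    have hsplitset : insert f (B \ {e}) = insert f X ∪ (B \ blockU E 0 m) := by
      ext x
      constructor
      · intro hx
        rcases Set.mem_insert_iff.1 hx with rfl | ⟨hxB, hxe⟩
        · exact Or.inl (Set.mem_insert _ _)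
        · by_cases hxU : x ∈ blockU E 0 m
          · exact Or.inl (Set.mem_insert_of_mem f ⟨⟨hxB, hxU⟩, hxe⟩)
          · exact Or.inr ⟨hxB, hxU⟩
      · intro hx
        rcases hx with hx | ⟨hxB, hxU⟩
        · rcases Set.mem_insert_iff.1 hx with rfl | ⟨⟨hxB, -⟩, hxe⟩
          · exact Set.mem_insert _ _
          · exact Set.mem_insert_of_mem _ ⟨hxB, hxe⟩
        · exact Set.mem_insert_of_mem _ ⟨hxB, fun h => hxU (Set.mem_singleton_iff.1 h ▸ hem)⟩
    have hcm : (B ∩ blockU E 0 m).ncard + (B \ blockU E 0 m).ncard = B.ncard :=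
      Set.ncard_inter_add_ncard_diff_eq_ncard B _ hBfin
    have hYsub : B \ blockU E 0 m ⊆ blockU E m t := by
      rw [diff_blockU hE hd hBE m]; exact Set.inter_subset_right
    have hYcard : (B \ blockU E 0 m).ncard = blockSum a m t := by
      have := hsplit m; omega
    have hXfc : (insert f X).ncard = blockSum a 0 m := by
      rw [Set.ncard_insert_of_notMem hfmem.2 ((hBfin.inter_of_left _).diff)]
      omega
    have hXfU : insert f X ⊆ blockU E 0 m :=
      Set.insert_subset hfU (fun x hx => hx.1.2)
    have hInd : M.Indep (insert f (B \ {e})) := by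
      rw [hsplitset]
      exact P2a m hm1 hmt _ _ (Matroid.restrict_indep_iff.mpr ⟨hfI, hXfU⟩) hXfc.le
        (Matroid.restrict_indep_iff.mpr ⟨hBb.indep.diff _, hYsub⟩) hYcard.le
    have hB''card : (insert f (B \ {e})).ncard = r :=
      (ncard_exch hBfin heB hfB).trans hBcard
    refine ⟨f, ⟨hfB', hfB⟩, base_of_indep_ncard hfin hInd (by omega), ?_, ?_⟩
    · intro h h1 hj'
      by_cases hfUh : f ∈ blockU E 0 h
      · by_cases heUh : e ∈ blockU E 0 h
        · rw [ce1 hBfin heB hfB heUh hfUh]; exact hBlow h h1 hj'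
        · rw [ce3 hBfin heB hfB heUh hfUh]; exact (hBlow h h1 hj').trans (Nat.le_succ _)
      · have hhm : h < m := by
          by_contra hc
          exact hfUh (blockU_mono E (by omega) hfU)
        by_cases heUh : e ∈ blockU E 0 h
        · have hnp := hmin h hhm
          have hne : (B ∩ blockU E 0 h).ncard ≠ blockSum a 0 h :=
            fun hc => hnp ⟨h1, hj', heUh, hc⟩
          have hge := hBlow h h1 hj'
          rw [ce2 hBfin heB hfB heUh hfUh]; omega
        · rw [ce4 hBfin heB hfB heUh hfUh]; exact hBlow h h1 hj'
    · have hmj' : m ≤ j := by omega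
      rw [ce1 hBfin heB hfB (blockU_mono E hmj' hem) (blockU_mono E hmj' hfU)]
      exact hBup
  · by_cases hBt : (B ∩ blockU E 0 j).ncard = blockSum a 0 j ∧ e ∉ blockU E 0 j
    -- Case B : the constraint at j is tight and e is beyond U_j
    · obtain ⟨hjtight, hejU⟩ := hBt
      have he2 : e ∈ B ∩ blockU E j t := by
        rw [← diff_blockU hE hd hBE j]; exact ⟨heB, hejU⟩
      obtain ⟨i, ⟨hi1, hi2⟩, -⟩ := mem_blockU.1 he2.2
      have hjt' : j < t := lt_of_le_of_lt hi1 hi2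
      have hbsj : 1 ≤ blockSum a j t := le_trans (ha ⟨j, hjt'⟩).1 (blockSum_le_single a hjt')
      have hsplitB : (B ∩ blockU E 0 j).ncard + (B \ blockU E 0 j).ncard = B.ncard :=
        Set.ncard_inter_add_ncard_diff_eq_ncard B _ hBfin
      have hsplitB' : (B' ∩ blockU E 0 j).ncard + (B' \ blockU E 0 j).ncard = B'.ncard :=
        Set.ncard_inter_add_ncard_diff_eq_ncard B' _ hB'fin
      set Y := (B \ blockU E 0 j) \ {e} with hYdef
      have heBU : e ∈ B \ blockU E 0 j := ⟨heB, hejU⟩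
      have hYcard : Y.ncard = (B \ blockU E 0 j).ncard - 1 :=
        Set.ncard_diff_singleton_of_mem heBU
      have hsj := hsplit j
      have hYindep : M.Indep Y := hBb.indep.subset (fun x hx => hx.1.1)
      have hlt : Y.encard < (B' \ blockU E 0 j).encard := by
        rw [← ((hBfin.diff).diff).cast_ncard_eq, ← (hB'fin.diff).cast_ncard_eq]
        exact_mod_cast (by omega : Y.ncard < (B' \ blockU E 0 j).ncard)
      obtain ⟨f, hfmem, hfI⟩ := hYindep.augment (hB'b.indep.diff _) hlt
      have hfB' : f ∈ B' := hfmem.1.1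
      have hfU : f ∉ blockU E 0 j := hfmem.1.2
      have hfe : f ≠ e := fun h => heB' (h ▸ hfB')
      have hfB : f ∉ B := fun h => hfmem.2 ⟨⟨h, hfU⟩, hfe⟩
      have hsplitset : insert f (B \ {e}) = (B ∩ blockU E 0 j) ∪ insert f Y := by
        ext x
        constructor
        · intro hx
          rcases Set.mem_insert_iff.1 hx with rfl | ⟨hxB, hxe⟩
          · exact Or.inr (Set.mem_insert _ _)
          · by_cases hxU : x ∈ blockU E 0 j
            · exact Or.inl ⟨hxB, hxU⟩
            · exact Or.inr (Set.mem_insert_of_mem f ⟨⟨hxB, hxU⟩, hxe⟩)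
        · intro hx
          rcases hx with ⟨hxB, hxU⟩ | hx
          · exact Set.mem_insert_of_mem _ ⟨hxB, fun h => hejU (Set.mem_singleton_iff.1 h ▸ hxU)⟩
          · rcases Set.mem_insert_iff.1 hx with rfl | ⟨⟨hxB, -⟩, hxe⟩
            · exact Set.mem_insert _ _
            · exact Set.mem_insert_of_mem _ ⟨hxB, hxe⟩
      have hfYU : insert f Y ⊆ blockU E j t := by
        apply Set.insert_subset
        · have : f ∈ B' \ blockU E 0 j := hfmem.1
          rw [diff_blockU hE hd hB'E j] at this
          exact this.2
        · intro x hx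
          have hx' : x ∈ B \ blockU E 0 j := hx.1
          rw [diff_blockU hE hd hBE j] at hx'
          exact hx'.2
      have hfYcard : (insert f Y).ncard = blockSum a j t := by
        rw [Set.ncard_insert_of_notMem hfmem.2 ((hBfin.diff).diff)]
        omega
      have hInd : M.Indep (insert f (B \ {e})) := by
        rw [hsplitset]
        exact P2a j hj1 (by omega) _ _
          (Matroid.restrict_indep_iff.mpr ⟨hBb.indep.inter_right _, Set.inter_subset_right⟩)
          hjtight.le
          (Matroid.restrict_indep_iff.mpr ⟨hfI, hfYU⟩) hfYcard.le
      have hB''card : (insert f (B \ {e})).ncard = r :=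
        (ncard_exch hBfin heB hfB).trans hBcard
      refine ⟨f, ⟨hfB', hfB⟩, base_of_indep_ncard hfin hInd (by omega), ?_, ?_⟩
      · intro h h1 hj'
        have heUh : e ∉ blockU E 0 h := fun hc => hejU (blockU_mono E (by omega) hc)
        have hfUh : f ∉ blockU E 0 h := fun hc => hfU (blockU_mono E (by omega) hc)
        rw [ce4 hBfin heB hfB heUh hfUh]; exact hBlow h h1 hj'
      · rw [ce4 hBfin heB hfB hejU hfU]; exact hBup
    -- Case C : ordinary exchange works
    · obtain ⟨f, hf, hBb''⟩ := hBb.exchange hB'b ⟨heB, heB'⟩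
      have hfB' : f ∈ B' := hf.1
      have hfB : f ∉ B := hf.2
      refine ⟨f, ⟨hfB', hfB⟩, hBb'', ?_, ?_⟩
      · intro h h1 hj'
        have hge := hBlow h h1 hj'
        by_cases heUh : e ∈ blockU E 0 h
        · have hne : (B ∩ blockU E 0 h).ncard ≠ blockSum a 0 h :=
            fun hc => hA ⟨h, h1, hj', heUh, hc⟩
          by_cases hfUh : f ∈ blockU E 0 h
          · rw [ce1 hBfin heB hfB heUh hfUh]; omega
          · rw [ce2 hBfin heB hfB heUh hfUh]; omega
        · by_cases hfUh : f ∈ blockU E 0 h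
          · rw [ce3 hBfin heB hfB heUh hfUh]; omega
          · rw [ce4 hBfin heB hfB heUh hfUh]; omega
      · have hle := hBup
        by_cases heUj : e ∈ blockU E 0 j
        · by_cases hfUj : f ∈ blockU E 0 j
          · rw [ce1 hBfin heB hfB heUj hfUj]; omega
          · rw [ce2 hBfin heB hfB heUj hfUj]; omega
        · have hne : (B ∩ blockU E 0 j).ncard ≠ blockSum a 0 j :=
            fun hc => hBt ⟨hc, heUj⟩
          by_cases hfUj : f ∈ blockU E 0 j
          · rw [ce3 hBfin heB hfB heUj hfUj]; omega
          · rw [ce4 hBfin heB hfB heUj hfUj]; omega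

end Stmt2

/-- for a good `t`-partition of `M`, each family `ℬ(M_j)` (for `1 ≤ j ≤ t`)
is the collection of bases of a matroid on `E`. -/
theorem statement2 {α : Type*} {t : ℕ} (ht : 2 ≤ t) (M : Matroid α) (hfin : M.E.Finite)
    (r : ℕ) (hrank : mrk M = r) (E : Fin t → Set α) (a : Fin t → ℕ)
    (hgood : IsGoodPartition M r E a) :
    ∀ j : ℕ, 1 ≤ j → j ≤ t → IsBaseCollection M.E (BFam M E a j) := by
  intro j hj1 hjt
  obtain ⟨hE, hd, -, ha, hr, P2a, -⟩ := hgood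
  have hne : ∃ B, B ∈ BFam M E a j := by
    obtain ⟨B, hBb, hc⟩ := Stmt2.exists_good_base hfin hrank hE hd ha hr P2a
    exact ⟨B, hBb, fun h h1 h2 => (hc h (by omega)).ge, (hc j hjt).le⟩
  have hex : Matroid.ExchangeProperty (· ∈ BFam M E a j) := by
    rintro B B' hB hB' e ⟨heB, heB'⟩
    obtain ⟨f, ⟨hf1, hf2⟩, hmem⟩ :=
      Stmt2.exchange_step hfin hrank hE hd ha hr P2a hj1 hjt hB hB' heB heB'
    exact ⟨f, ⟨hf1, hf2⟩, hmem⟩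
  exact ⟨Matroid.ofIsBaseOfFinite hfin (· ∈ BFam M E a j) hne hex
    (fun B hB => hB.1.subset_ground), rfl, fun B => Iff.rfl⟩
end

section
/- Let t ≥ 2, let M be a matroid of rank r on E, and let E = E_1 ∪ ⋯ ∪ E_t be a good t-partition of M with associated integers a_1,…,a_t. Then the family B(M̄_1) = {B a base of M : |B ∩ E_1| ≥ a_1} is the collection of bases of a matroid on E. -/
open Matroid Set

lemma blockSum_split {t : ℕ} (a : Fin t → ℕ) {lo mid hi : ℕ} (h1 : lo ≤ mid) (h2 : mid ≤ hi) :
    blockSum a lo hi = blockSum a lo mid + blockSum a mid hi := by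
  unfold blockSum
  rw [← Finset.sum_union (by
    rw [Finset.disjoint_left]
    intro i hi1 hi2
    simp only [Finset.mem_filter, Finset.mem_univ, true_and] at hi1 hi2
    omega)]
  congr 1
  ext i
  simp only [Finset.mem_union, Finset.mem_filter, Finset.mem_univ, true_and]
  omega

lemma blockSum_single {t : ℕ} (a : Fin t → ℕ) {k : ℕ} (hk : k < t) :
    blockSum a k (k+1) = a ⟨k, hk⟩ := by
  unfold blockSum
  rw [show Finset.univ.filter (fun i : Fin t => k ≤ (i : ℕ) ∧ (i : ℕ) < k + 1) = {⟨k, hk⟩} by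
    ext i
    simp only [Finset.mem_filter, Finset.mem_univ, true_and, Finset.mem_singleton, Fin.ext_iff]
    omega]
  simp

lemma blockSum_all {t : ℕ} (a : Fin t → ℕ) : blockSum a 0 t = ∑ i, a i := by
  unfold blockSum
  rw [Finset.filter_true_of_mem (fun i _ => ⟨Nat.zero_le _, i.isLt⟩)]

lemma blockU_split {α : Type*} {t : ℕ} (E : Fin t → Set α) {lo mid hi : ℕ}
    (h1 : lo ≤ mid) (h2 : mid ≤ hi) :
    blockU E lo hi = blockU E lo mid ∪ blockU E mid hi := by
  unfold blockU
  ext x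
  simp only [mem_iUnion, mem_setOf_eq, mem_union, exists_prop]
  constructor
  · rintro ⟨i, ⟨ha, hb⟩, hx⟩
    rcases lt_or_ge (i : ℕ) mid with h | h
    · exact Or.inl ⟨i, ⟨ha, h⟩, hx⟩
    · exact Or.inr ⟨i, ⟨h, hb⟩, hx⟩
  · rintro (⟨i, ⟨ha, hb⟩, hx⟩ | ⟨i, ⟨ha, hb⟩, hx⟩)
    · exact ⟨i, ⟨ha, by omega⟩, hx⟩
    · exact ⟨i, ⟨by omega, hb⟩, hx⟩

lemma blockU_single {α : Type*} {t : ℕ} (E : Fin t → Set α) {k : ℕ} (hk : k < t) :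
    blockU E k (k+1) = E ⟨k, hk⟩ := by
  unfold blockU
  ext x
  simp only [mem_iUnion, mem_setOf_eq, exists_prop]
  constructor
  · rintro ⟨i, ⟨ha, hb⟩, hx⟩
    have : i = ⟨k, hk⟩ := Fin.ext (show (i : ℕ) = k by omega)
    rwa [this] at hx
  · intro hx
    exact ⟨⟨k, hk⟩, ⟨by simp, by simp⟩, hx⟩

lemma blockU_all {α : Type*} {t : ℕ} (E : Fin t → Set α) : blockU E 0 t = ⋃ i, E i := by
  unfold blockU
  ext x
  simp only [mem_iUnion, mem_setOf_eq, exists_prop]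
  exact ⟨fun ⟨i, _, hx⟩ => ⟨i, hx⟩, fun ⟨i, hx⟩ => ⟨i, ⟨Nat.zero_le _, i.isLt⟩, hx⟩⟩

lemma blockU_disjoint {α : Type*} {t : ℕ} {E : Fin t → Set α}
    (hdisj : Pairwise (Function.onFun Disjoint E)) {lo mid hi : ℕ} :
    Disjoint (blockU E lo mid) (blockU E mid hi) := by
  rw [Set.disjoint_left]
  intro x hx hx'
  simp only [blockU, mem_iUnion, mem_setOf_eq, exists_prop] at hx hx'
  obtain ⟨i, ⟨_, hi2⟩, hxi⟩ := hx
  obtain ⟨j, ⟨hj1, _⟩, hxj⟩ := hx'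
  have hij : i ≠ j := by rw [Fin.ne_iff_vne]; omega
  exact (hdisj hij).le_bot ⟨hxi, hxj⟩

lemma mrk_spec {α : Type*} (M : Matroid α) (h : M.E.Finite) :
    (∃ I, M.Indep I ∧ I.ncard = mrk M) ∧ ∀ J, M.Indep J → J.ncard ≤ mrk M := by
  have hbdd : BddAbove {n : ℕ | ∃ I, M.Indep I ∧ I.ncard = n} := by
    refine ⟨M.E.ncard, ?_⟩
    rintro n ⟨I, hI, rfl⟩
    exact ncard_le_ncard hI.subset_ground h
  have hne : {n : ℕ | ∃ I, M.Indep I ∧ I.ncard = n}.Nonempty :=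
    ⟨0, ∅, M.empty_indep, by simp⟩
  exact ⟨Nat.sSup_mem hne hbdd, fun J hJ => le_csSup hbdd ⟨J, hJ, rfl⟩⟩

lemma base_iff_mrk {α : Type*} (M : Matroid α) (h : M.E.Finite) (B : Set α) :
    M.IsBase B ↔ M.Indep B ∧ B.ncard = mrk M := by
  obtain ⟨⟨I, hI, hIc⟩, hub⟩ := mrk_spec M h
  constructor
  · intro hB
    refine ⟨hB.indep, le_antisymm (hub _ hB.indep) ?_⟩
    obtain ⟨B', hB', hIB'⟩ := hI.exists_isBase_superset
    have h1 : I.ncard ≤ B'.ncard := ncard_le_ncard hIB' (h.subset hB'.subset_ground)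
    have h2 : B'.ncard = B.ncard := hB'.ncard_eq_ncard_of_isBase hB
    omega
  · rintro ⟨hB, hBc⟩
    obtain ⟨B', hB', hBB'⟩ := hB.exists_isBase_superset
    have h1 : B'.ncard ≤ mrk M := hub _ hB'.indep
    have h2 : B = B' :=
      eq_of_subset_of_ncard_le hBB' (by omega) (h.subset hB'.subset_ground)
    rwa [h2]

lemma exists_indep_ncard {α : Type*} (M : Matroid α) (h : M.E.Finite) {m : ℕ}
    (hm : m ≤ mrk M) : ∃ I, M.Indep I ∧ I.ncard = m := by
  obtain ⟨⟨I, hI, hIc⟩, -⟩ := mrk_spec M h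
  obtain ⟨J, hJI, hJc⟩ := Set.exists_subset_card_eq (by omega : m ≤ I.ncard)
  exact ⟨J, hI.subset hJI, hJc⟩

/-- for a good `t`-partition of `M`, the family
`ℬ(M̄₁) = {B base of M : |B ∩ E₁| ≥ a₁}` is the collection of bases of a matroid on `E`.
(Here `blockU E 0 1` is the first block `E₁` and `blockSum a 0 1 = a₁`.) -/
theorem statement3 {α : Type*} {t : ℕ} (ht : 2 ≤ t) (M : Matroid α) (hfin : M.E.Finite)
    (r : ℕ) (hrank : mrk M = r) (E : Fin t → Set α) (a : Fin t → ℕ)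
    (hgood : IsGoodPartition M r E a) :
    IsBaseCollection M.E {B | M.IsBase B ∧ blockSum a 0 1 ≤ (B ∩ blockU E 0 1).ncard} := by
  obtain ⟨hE, hdisj, hrkE, ha, hP1, hP2a, hP2b⟩ := hgood
  have h0t : 0 < t := by omega
  have hEsub : ∀ i, E i ⊆ M.E := fun i => hE ▸ subset_iUnion E i
  have hfinS : ∀ s : Set α, s ⊆ M.E → s.Finite := fun s hs => hfin.subset hs
  have hE1 : blockU E 0 1 = E ⟨0, h0t⟩ := blockU_single E h0t
  have ha1 : blockSum a 0 1 = a ⟨0, h0t⟩ := blockSum_single a h0t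
  have hXi : ∀ i : Fin t, ∃ X, M.Indep X ∧ X ⊆ E i ∧ X.ncard = a i := by
    intro i
    obtain ⟨X, hX, hXc⟩ := exists_indep_ncard (M ↾ E i)
      (by rw [restrict_ground_eq]; exact hfinS _ (hEsub i)) (le_of_lt (ha i).2)
    rw [restrict_indep_iff] at hX
    exact ⟨X, hX.1, hX.2, hXc⟩
  have hsum : blockSum a 0 t = r := by rw [blockSum_all, ← hP1]
  -- independent sets of full size spanning suffix blocks
  have key : ∀ d : ℕ, 1 ≤ t - 1 - d →
      ∃ W, M.Indep W ∧ W ⊆ blockU E (t - 1 - d) t ∧ W.ncard = blockSum a (t - 1 - d) t := by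
    intro d
    induction d with
    | zero =>
      intro _
      simp only [Nat.sub_zero]
      obtain ⟨X, hX, hXsub, hXc⟩ := hXi ⟨t - 1, by omega⟩
      have h1 : blockU E (t-1) t = E ⟨t-1, by omega⟩ := by
        have h := blockU_single E (show t - 1 < t by omega)
        rwa [show t - 1 + 1 = t by omega] at h
      have h2 : blockSum a (t-1) t = a ⟨t-1, by omega⟩ := by
        have h := blockSum_single a (show t - 1 < t by omega)
        rwa [show t - 1 + 1 = t by omega] at h
      exact ⟨X, hX, h1 ▸ hXsub, by rw [h2, hXc]⟩
    | succ d ih =>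
      intro hd
      set k := t - 1 - (d + 1) with hkdef
      have hk1 : t - 1 - d = k + 1 := by omega
      obtain ⟨W, hW, hWsub, hWc⟩ := ih (by omega)
      rw [hk1] at hWsub hWc
      have hkt : k < t := by omega
      obtain ⟨X, hX, hXsub, hXc⟩ := hXi ⟨k, hkt⟩
      have hXU : X ⊆ blockU E k (k+1) := by rw [blockU_single E hkt]; exact hXsub
      have hind : M.Indep (∅ ∪ X ∪ W) := by
        apply hP2b k (k+1) (by omega) (by omega) (by omega)
        · simp
        · simp
        · exact restrict_indep_iff.mpr ⟨hX, hXU⟩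
        · rw [blockSum_single a hkt, hXc]
        · exact restrict_indep_iff.mpr ⟨hW, hWsub⟩
        · rw [hWc]
      rw [empty_union] at hind
      have hdXW : Disjoint X W :=
        Set.disjoint_of_subset hXU hWsub (blockU_disjoint hdisj)
      refine ⟨X ∪ W, hind, ?_, ?_⟩
      · rw [blockU_split E (Nat.le_succ k) (by omega : k + 1 ≤ t)]
        exact union_subset_union hXU hWsub
      · rw [ncard_union_eq hdXW (hfinS _ hX.subset_ground) (hfinS _ hW.subset_ground),
          blockSum_split a (Nat.le_succ k) (by omega : k + 1 ≤ t),
          blockSum_single a hkt, hXc, hWc]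
  have ht1 : (1:ℕ) ≤ t - 1 := by omega
  obtain ⟨W₁, hW₁, hW₁sub, hW₁c⟩ : ∃ W, M.Indep W ∧ W ⊆ blockU E 1 t ∧
      W.ncard = blockSum a 1 t := by
    have h := key (t - 2) (by omega)
    rwa [show t - 1 - (t - 2) = 1 by omega] at h
  -- combination: a correctly-sized independent set in E₁ plus one in the rest gives a base
  have hcomb : ∀ X Y : Set α, M.Indep X → X ⊆ blockU E 0 1 → X.ncard = blockSum a 0 1 →
      M.Indep Y → Y ⊆ blockU E 1 t → Y.ncard = blockSum a 1 t →
      M.IsBase (X ∪ Y) ∧ (X ∪ Y) ∩ blockU E 0 1 = X := by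
    intro X Y hX hXsub hXc hY hYsub hYc
    have hind : M.Indep (X ∪ Y) :=
      hP2a 1 le_rfl ht1 X Y (restrict_indep_iff.mpr ⟨hX, hXsub⟩) hXc.le
        (restrict_indep_iff.mpr ⟨hY, hYsub⟩) hYc.le
    have hdXY : Disjoint X Y := Set.disjoint_of_subset hXsub hYsub (blockU_disjoint hdisj)
    have hcard : (X ∪ Y).ncard = r := by
      rw [ncard_union_eq hdXY (hfinS _ hX.subset_ground) (hfinS _ hY.subset_ground), hXc, hYc,
        ← blockSum_split a (by omega : 0 ≤ 1) (by omega : 1 ≤ t), hsum]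
    refine ⟨(base_iff_mrk M hfin _).mpr ⟨hind, by rw [hcard, hrank]⟩, ?_⟩
    have hYE1 : Y ∩ blockU E 0 1 = ∅ := by
      rw [← disjoint_iff_inter_eq_empty]
      exact disjoint_of_subset_left hYsub (blockU_disjoint hdisj).symm
    rw [union_inter_distrib_right, inter_eq_self_of_subset_left hXsub, hYE1, union_empty]
  -- existence of a base in the family
  obtain ⟨X₀, hX₀, hX₀sub, hX₀c⟩ := hXi ⟨0, h0t⟩
  have hX₀sub' : X₀ ⊆ blockU E 0 1 := by rw [hE1]; exact hX₀sub
  obtain ⟨hbase₀, hint₀⟩ := hcomb X₀ W₁ hX₀ hX₀sub' (by rw [hX₀c, ha1]) hW₁ hW₁sub hW₁c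
  have hexists : ∃ B, M.IsBase B ∧ blockSum a 0 1 ≤ (B ∩ blockU E 0 1).ncard :=
    ⟨X₀ ∪ W₁, hbase₀, by rw [hint₀, hX₀c, ha1]⟩
  -- the exchange property
  have hexch : Matroid.ExchangeProperty
      (fun B => M.IsBase B ∧ blockSum a 0 1 ≤ (B ∩ blockU E 0 1).ncard) := by
    rintro B₁ B₂ ⟨hB₁, hB₁c⟩ ⟨hB₂, hB₂c⟩ e he
    have hfinB₁E : (B₁ ∩ blockU E 0 1).Finite := hfinS _ fun x hx => hB₁.subset_ground hx.1
    by_cases hcase : e ∈ blockU E 0 1 ∧ (B₁ ∩ blockU E 0 1).ncard ≤ blockSum a 0 1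
    · -- hard case : e ∈ E₁ and |B₁ ∩ E₁| = a₁
      obtain ⟨heE1, hle⟩ := hcase
      have hceq : (B₁ ∩ blockU E 0 1).ncard = blockSum a 0 1 := le_antisymm hle hB₁c
      have hSfin : ((B₁ ∩ blockU E 0 1) \ {e}).Finite := hfinB₁E.diff
      have hSind : M.Indep ((B₁ ∩ blockU E 0 1) \ {e}) :=
        hB₁.indep.subset (fun x hx => hx.1.1)
      have hScard : ((B₁ ∩ blockU E 0 1) \ {e}).ncard = blockSum a 0 1 - 1 := by
        rw [ncard_diff_singleton_of_mem (show e ∈ B₁ ∩ blockU E 0 1 from ⟨he.1, heE1⟩), hceq]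
      have hTind : M.Indep (B₂ ∩ blockU E 0 1) := hB₂.indep.subset inter_subset_left
      have hTfin : (B₂ ∩ blockU E 0 1).Finite := hfinS _ fun x hx => hB₂.subset_ground hx.1
      have ha1pos : 0 < blockSum a 0 1 := by rw [ha1]; exact (ha _).1
      have hlt : ((B₁ ∩ blockU E 0 1) \ {e}).encard < (B₂ ∩ blockU E 0 1).encard := by
        rw [← hSfin.cast_ncard_eq, ← hTfin.cast_ncard_eq]
        exact_mod_cast (by omega : ((B₁ ∩ blockU E 0 1) \ {e}).ncard
          < (B₂ ∩ blockU E 0 1).ncard)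
      obtain ⟨f, hf, hfind⟩ := hSind.augment hTind hlt
      have hfB₂ : f ∈ B₂ := hf.1.1
      have hfE1 : f ∈ blockU E 0 1 := hf.1.2
      have hfe : f ≠ e := fun h => he.2 (h ▸ hfB₂)
      have hfB₁ : f ∉ B₁ := fun h => hf.2 ⟨⟨h, hfE1⟩, hfe⟩
      have hX'sub : insert f ((B₁ ∩ blockU E 0 1) \ {e}) ⊆ blockU E 0 1 :=
        insert_subset hfE1 (fun x hx => hx.1.2)
      have hX'c : (insert f ((B₁ ∩ blockU E 0 1) \ {e})).ncard = blockSum a 0 1 := by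
        rw [ncard_insert_of_notMem hf.2 hSfin, hScard]; omega
      have hYind : M.Indep (B₁ \ blockU E 0 1) := hB₁.indep.subset diff_subset
      have hYsub : B₁ \ blockU E 0 1 ⊆ blockU E 1 t := by
        intro x hx
        have hxE : x ∈ blockU E 0 t := by
          rw [blockU_all, hE]; exact hB₁.subset_ground hx.1
        rw [blockU_split E (by omega : 0 ≤ 1) (by omega : 1 ≤ t)] at hxE
        exact hxE.resolve_left hx.2
      have hdisj' : Disjoint (B₁ ∩ blockU E 0 1) (B₁ \ blockU E 0 1) := by
        rw [Set.disjoint_left]; intro x hx hx'; exact hx'.2 hx.2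
      have hB₁split : (B₁ ∩ blockU E 0 1).ncard + (B₁ \ blockU E 0 1).ncard = B₁.ncard := by
        rw [← ncard_union_eq hdisj' hfinB₁E (hfinS _ fun x hx => hB₁.subset_ground hx.1),
          Set.inter_union_diff]
      have hB₁card : B₁.ncard = r := by
        rw [((base_iff_mrk M hfin _).mp hB₁).2, hrank]
      have hYc : (B₁ \ blockU E 0 1).ncard = blockSum a 1 t := by
        have hsplit : blockSum a 0 1 + blockSum a 1 t = r := by
          rw [← blockSum_split a (by omega : 0 ≤ 1) (by omega : 1 ≤ t), hsum]
        omega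
      obtain ⟨hbase', hint'⟩ := hcomb _ _ hfind hX'sub hX'c hYind hYsub hYc
      have hSY : (B₁ ∩ blockU E 0 1) \ {e} ∪ B₁ \ blockU E 0 1 = B₁ \ {e} := by
        ext x
        simp only [mem_union, mem_diff, mem_inter_iff, mem_singleton_iff]
        constructor
        · rintro (⟨⟨h1, _⟩, h2⟩ | ⟨h1, h2⟩)
          · exact ⟨h1, h2⟩
          · exact ⟨h1, fun hx => h2 (hx ▸ heE1)⟩
        · rintro ⟨h1, h2⟩
          by_cases hU : x ∈ blockU E 0 1
          · exact Or.inl ⟨⟨h1, hU⟩, h2⟩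
          · exact Or.inr ⟨h1, hU⟩
      have hset : insert f ((B₁ ∩ blockU E 0 1) \ {e}) ∪ B₁ \ blockU E 0 1
          = insert f (B₁ \ {e}) := by rw [insert_union, hSY]
      refine ⟨f, ⟨hfB₂, hfB₁⟩, ?_, ?_⟩
      · rw [← hset]; exact hbase'
      · rw [← hset, hint', hX'c]
    · -- easy case
      obtain ⟨f, hf, hbase⟩ := hB₁.exchange hB₂ he
      refine ⟨f, hf, hbase, ?_⟩
      push_neg at hcase
      have hfinNew : (insert f (B₁ \ {e}) ∩ blockU E 0 1).Finite :=
        hfinS _ fun x hx => hbase.subset_ground hx.1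
      by_cases heE : e ∈ blockU E 0 1
      · have hgt := hcase heE
        have hsub : (B₁ ∩ blockU E 0 1) \ {e} ⊆ insert f (B₁ \ {e}) ∩ blockU E 0 1 := by
          rintro x ⟨⟨hx1, hx2⟩, hx3⟩
          exact ⟨mem_insert_iff.mpr (Or.inr ⟨hx1, hx3⟩), hx2⟩
        have h1 : ((B₁ ∩ blockU E 0 1) \ {e}).ncard = (B₁ ∩ blockU E 0 1).ncard - 1 :=
          ncard_diff_singleton_of_mem (show e ∈ B₁ ∩ blockU E 0 1 from ⟨he.1, heE⟩)
        have h2 : ((B₁ ∩ blockU E 0 1) \ {e}).ncard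
            ≤ (insert f (B₁ \ {e}) ∩ blockU E 0 1).ncard := ncard_le_ncard hsub hfinNew
        omega
      · have hsub : B₁ ∩ blockU E 0 1 ⊆ insert f (B₁ \ {e}) ∩ blockU E 0 1 := by
          rintro x ⟨hx1, hx2⟩
          exact ⟨mem_insert_iff.mpr (Or.inr ⟨hx1, fun h =>
            heE (mem_singleton_iff.mp h ▸ hx2)⟩), hx2⟩
        exact le_trans hB₁c (ncard_le_ncard hsub hfinNew)
  exact ⟨Matroid.ofIsBaseOfFinite hfin _ hexists hexch (fun B hB => hB.1.subset_ground),
    rfl, fun B => by rw [Matroid.ofIsBaseOfFinite_isBase]; exact Iff.rfl⟩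
end
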